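/- arXiv:0707.2890 — 2 statements merged into one kernel-verified Lean document; each statement's English description precedes it below -/
import Mathlib

section
/- Let N be a level-2 network consistent with a dense triplet set T, let T' = CutInduce(N,T) be the induced triplet set on the leaf set of Collapse(N). If N' is any network consistent with T', then the network obtained from N' by expanding each collapsed leaf V back into the subnetwork of N below the corresponding highest cut-arc is consistent with T. -/
namespace Phylo

variable {V : Type*}

/-- In-degree of a vertex in a directed graph given by relation `R`. -/
noncomputable def inDeg (R : V → V → Prop) (v : V) : ℕ := {u | R u v}.ncard

/-- Out-degree of a vertex. -/
noncomputable def outDeg (R : V → V → Prop) (v : V) : ℕ := {w | R v w}.ncard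

/-- A phylogenetic network: an acyclic digraph with a unique root of indegree 0 and
outdegree 2, in which every vertex is the root, a split vertex (indeg 1, outdeg 2),
a recombination vertex (indeg 2, outdeg 1) or a leaf (indeg 1, outdeg 0). -/
def IsPhyloNet (R : V → V → Prop) : Prop :=
  (∀ v, ¬ Relation.TransGen R v v) ∧
  (∃! r, inDeg R r = 0) ∧
  (∀ v : V, (inDeg R v = 0 ∧ outDeg R v = 2) ∨ (inDeg R v = 1 ∧ outDeg R v = 2) ∨
    (inDeg R v = 2 ∧ outDeg R v = 1) ∨ (inDeg R v = 1 ∧ outDeg R v = 0))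

/-- A leaf is a vertex of outdegree 0. -/
def IsLf (R : V → V → Prop) (v : V) : Prop := outDeg R v = 0

/-- The set of leaves of a network. -/
def netLeaves (R : V → V → Prop) : Set V := {v | IsLf R v}

/-- `p` is a directed path (as a nonempty list of vertices) from `a` to `b`. -/
def IsPth (R : V → V → Prop) (p : List V) (a b : V) : Prop :=
  p ≠ [] ∧ p.head? = some a ∧ p.getLast? = some b ∧ p.Chain' R

/-- Internal vertices of a path. -/
def interior (p : List V) : List V := p.tail.dropLast

/-- Two paths are internally vertex-disjoint. -/
def IntDisj (p q : List V) : Prop :=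
  (∀ v ∈ interior p, v ∉ q) ∧ (∀ v ∈ interior q, v ∉ p)

/-- The triplet xy|z is consistent with the network `R`: there are `u ≠ v` and pairwise
internally vertex-disjoint paths `u→x`, `u→y`, `v→u`, `v→z`. -/
def ConsistentTrip (R : V → V → Prop) (x y z : V) : Prop :=
  ∃ u v : V, ∃ p1 p2 p3 p4 : List V, u ≠ v ∧
    IsPth R p1 u x ∧ IsPth R p2 u y ∧ IsPth R p3 v u ∧ IsPth R p4 v z ∧
    IntDisj p1 p2 ∧ IntDisj p1 p3 ∧ IntDisj p1 p4 ∧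
    IntDisj p2 p3 ∧ IntDisj p2 p4 ∧ IntDisj p3 p4

/-- `(x,y,z) ∈ T` codes the rooted triplet xy|z; `trip T x y z` says xy|z ∈ T
(taking into account the symmetry xy|z = yx|z). -/
def trip (T : Set (V × V × V)) (x y z : V) : Prop := (x, y, z) ∈ T ∨ (y, x, z) ∈ T

/-- The leaf set L(T) of a triplet set. -/
def tripLeaves (T : Set (V × V × V)) : Set V :=
  {a | ∃ t ∈ T, a = t.1 ∨ a = t.2.1 ∨ a = t.2.2}

/-- `T` is dense: every 3-element subset of L(T) supports at least one triplet of `T`. -/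
def DenseT (T : Set (V × V × V)) : Prop :=
  ∀ x y z, x ∈ tripLeaves T → y ∈ tripLeaves T → z ∈ tripLeaves T →
    x ≠ y → x ≠ z → y ≠ z → trip T x y z ∨ trip T x z y ∨ trip T y z x

/-- An SN-set of `T`: a subset of L(T) closed under the operation
`S_T(X) = X ∪ {c | ∃ x y ∈ X, xc|y ∈ T}`. -/
def IsSNSet (T : Set (V × V × V)) (Y : Set V) : Prop :=
  Y ⊆ tripLeaves T ∧
    ∀ ⦃c x y : V⦄, x ∈ Y → y ∈ Y → c ∈ tripLeaves T → trip T x c y → c ∈ Y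

/-- `SN T X`: the closure of `X` under `S_T`, i.e. the smallest SN-superset of `X`. -/
def SN (T : Set (V × V × V)) (X : Set V) : Set V := ⋂₀ {Y | X ⊆ Y ∧ IsSNSet T Y}

/-- A maximal SN-set: a proper SN-set such that the only SN-set strictly containing
it is L(T) itself. -/
def MaxSN (T : Set (V × V × V)) (S : Set V) : Prop :=
  IsSNSet T S ∧ S ≠ tripLeaves T ∧ ∀ Y, IsSNSet T Y → S ⊂ Y → Y = tripLeaves T

/-- A network is consistent with a triplet set if it is consistent with every triplet. -/
def ConsistentSet (R : V → V → Prop) (T : Set (V × V × V)) : Prop :=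
  ∀ t ∈ T, ConsistentTrip R t.1 t.2.1 t.2.2

/-- A cut-arc: an arc whose removal disconnects the underlying undirected graph. -/
def CutArc (R : V → V → Prop) (u v : V) : Prop :=
  R u v ∧ ∃ a b : V, ¬ Relation.ReflTransGen
    (fun p q => (R p q ∨ R q p) ∧ ¬((p = u ∧ q = v) ∨ (p = v ∧ q = u))) a b

/-- The set of leaves below the arc `(u,v)`: leaves reachable from `v`. -/
def leavesBelow (R : V → V → Prop) (u v : V) : Set V :=
  {ℓ | IsLf R ℓ ∧ Relation.ReflTransGen R v ℓ}

/-- A highest cut-arc: a cut-arc `(u,v)` such that there is no cut-arc `(u',v')`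
with `u` reachable from `v'`. -/
def HighestCutArc (R : V → V → Prop) (u v : V) : Prop :=
  CutArc R u v ∧ ∀ u' v', CutArc R u' v' → ¬ Relation.ReflTransGen R v' u

/-- The subset `S` is connected in the underlying undirected graph. -/
def ConnOn (R : V → V → Prop) (S : Set V) : Prop :=
  ∀ a ∈ S, ∀ b ∈ S,
    Relation.ReflTransGen (fun p q => p ∈ S ∧ q ∈ S ∧ (R p q ∨ R q p)) a b

/-- `S` induces a biconnected subgraph containing at least one arc. -/
def BiconnSet (R : V → V → Prop) (S : Set V) : Prop :=
  (∃ a ∈ S, ∃ b ∈ S, R a b) ∧ ConnOn R S ∧ ∀ w ∈ S, ConnOn R (S \ {w})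

/-- A biconnected component: a maximal biconnected vertex set. -/
def IsBCC (R : V → V → Prop) (S : Set V) : Prop :=
  BiconnSet R S ∧ ∀ S', BiconnSet R S' → S ⊆ S' → S' = S

/-- A level-k network: every biconnected component has at most `k` recombination
vertices. -/
def LevelK (k : ℕ) (R : V → V → Prop) : Prop :=
  ∀ S, IsBCC R S → ({v ∈ S | inDeg R v = 2}).ncard ≤ k

/-- A valid (non-redundant) network: every nontrivial biconnected component has at
least three outgoing arcs. -/
def GoodNet (R : V → V → Prop) : Prop :=
  IsPhyloNet R ∧ ∀ S, IsBCC R S → 3 ≤ S.ncard →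
    3 ≤ {p : V × V | R p.1 p.2 ∧ p.1 ∈ S ∧ p.2 ∉ S}.ncard

end Phylo
namespace Phylo

/-- The expansion of the network `R'` (whose leaves correspond, via `g`, to the
highest cut-arcs of `N = R`): each leaf `b` of `R'` is replaced by the subnetwork of
`R` rooted at the target `(g b).2` of the corresponding highest cut-arc. -/
def ExpandArc {V' V : Type*} (R' : V' → V' → Prop) (R : V → V → Prop)
    (g : V' → V × V) : V' ⊕ V → V' ⊕ V → Prop
  | Sum.inl a, Sum.inl b => R' a b ∧ ¬ IsLf R' b
  | Sum.inl a, Sum.inr v => ∃ b, R' a b ∧ IsLf R' b ∧ v = (g b).2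
  | Sum.inr a, Sum.inr b => R a b ∧ ∃ c, IsLf R' c ∧ Relation.ReflTransGen R (g c).2 a
  | Sum.inr _, Sum.inl _ => False

end Phylo

set_option linter.dupNamespace false

namespace Phylo

variable {α : Type*} {S : α → α → Prop} {p q : List α} {a b w : α}

lemma isPth_singleton (a : α) : IsPth S [a] a a := by
  refine ⟨by simp, by simp, by simp, by simp [List.Chain']⟩

lemma IsPth.exists_cons (h : IsPth S p a b) : ∃ t, p = a :: t := by
  obtain ⟨hne, hh, -, -⟩ := h
  cases p with
  | nil => exact absurd rfl hne
  | cons x t =>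
    simp at hh
    exact ⟨t, by rw [hh]⟩

lemma IsPth.head_mem (h : IsPth S p a b) : a ∈ p := by
  obtain ⟨t, rfl⟩ := h.exists_cons; simp

lemma IsPth.last_mem (h : IsPth S p a b) : b ∈ p := by
  obtain ⟨hne, -, hl, -⟩ := h
  have := List.getLast?_eq_getLast hne
  rw [this] at hl
  simp at hl
  rw [← hl]
  exact List.getLast_mem hne

lemma tail_dropLast (l : List α) : l.tail.dropLast = l.dropLast.tail := by
  induction l with
  | nil => simp
  | cons x t ih =>
    cases t with
    | nil => simp
    | cons y s => simp

lemma interior_sub_tail : interior p ⊆ p.tail := by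
  exact (List.dropLast_sublist _).subset

lemma interior_sub_dropLast : interior p ⊆ p.dropLast := by
  rw [interior, tail_dropLast]; exact (List.tail_sublist _).subset

lemma interior_subset : interior p ⊆ p :=
  fun _ h => (List.tail_sublist p).subset (interior_sub_tail h)

end Phylo

namespace Phylo
variable {α : Type*} {S : α → α → Prop} {p q : List α} {a b c d w : α}

lemma chain'_cons_trans {t : List α} (h : List.Chain' S (a :: t)) :
    ∀ w ∈ t, Relation.TransGen S a w := by
  induction t generalizing a with
  | nil => simp
  | cons x s ih =>
    intro w hw
    have h1 : S a x := List.isChain_cons_cons.mp h |>.1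
    have h2 : List.Chain' S (x :: s) := List.isChain_cons_cons.mp h |>.2
    rcases List.mem_cons.mp hw with rfl | hw
    · exact Relation.TransGen.single h1
    · exact Relation.TransGen.head h1 (ih h2 w hw)

lemma IsPth.tail_trans (h : IsPth S p a b) (hw : w ∈ p.tail) :
    Relation.TransGen S a w := by
  obtain ⟨t, rfl⟩ := h.exists_cons
  exact chain'_cons_trans h.2.2.2 w hw

lemma IsPth.reach (h : IsPth S p a b) (hw : w ∈ p) :
    Relation.ReflTransGen S a w := by
  obtain ⟨t, rfl⟩ := h.exists_cons
  rcases List.mem_cons.mp hw with rfl | hw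
  · exact Relation.ReflTransGen.refl
  · exact (h.tail_trans (by simpa using hw)).to_reflTransGen

lemma chain'_nodup (hacyc : ∀ v, ¬ Relation.TransGen S v v)
    (h : List.Chain' S p) : p.Nodup := by
  induction p with
  | nil => simp
  | cons x t ih =>
    refine List.nodup_cons.mpr ⟨fun hx => ?_, ih h.tail⟩
    exact hacyc x (chain'_cons_trans h x hx)

lemma IsPth.nodup (hacyc : ∀ v, ¬ Relation.TransGen S v v)
    (h : IsPth S p a b) : p.Nodup := chain'_nodup hacyc h.2.2.2

lemma IsPth.getLast_eq (h : IsPth S p a b) : p.getLast h.1 = b := by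
  have h1 := List.getLast?_eq_getLast h.1
  have h2 := h.2.2.1
  rw [h1] at h2
  exact Option.some_injective _ h2

lemma IsPth.head_eq (h : IsPth S p a b) : ∃ t, p = a :: t := h.exists_cons

lemma IsPth.mem_decomp (h : IsPth S p a b) (hw : w ∈ p) :
    w = a ∨ w = b ∨ w ∈ interior p := by
  obtain ⟨t, rfl⟩ := h.exists_cons
  rcases List.mem_cons.mp hw with rfl | hw
  · exact Or.inl rfl
  · rcases List.eq_nil_or_concat t with rfl | ⟨s, z, rfl⟩
    · simp at hw
    · have hb : z = b := by
        have := h.getLast_eq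
        simpa using this
      rw [List.concat_eq_append, List.mem_append] at hw
      rcases hw with hw | hw
      · exact Or.inr (Or.inr (by simp [interior, List.concat_eq_append]; exact hw))
      · simp at hw; exact Or.inr (Or.inl (hw ▸ hb))

lemma getLast_not_mem_dropLast (hnd : p.Nodup) (hne : p ≠ []) :
    p.getLast hne ∉ p.dropLast := by
  intro hmem
  have heq : p.dropLast ++ [p.getLast hne] = p := List.dropLast_append_getLast hne
  rw [← heq] at hnd
  have := List.disjoint_of_nodup_append hnd
  exact this hmem (by simp)

lemma IsPth.int_ne (hacyc : ∀ v, ¬ Relation.TransGen S v v)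
    (h : IsPth S p a b) (hw : w ∈ interior p) : w ∈ p ∧ w ≠ a ∧ w ≠ b := by
  have hnd := h.nodup hacyc
  have hwp : w ∈ p := interior_subset hw
  obtain ⟨t, rfl⟩ := h.exists_cons
  refine ⟨hwp, fun hwa => ?_, fun hwb => ?_⟩
  · exact (List.nodup_cons.mp hnd).1 (hwa ▸ interior_sub_tail hw)
  · have hd : w ∈ (a :: t).dropLast := interior_sub_dropLast hw
    have hg : (a :: t).getLast (by simp) = b := h.getLast_eq
    exact getLast_not_mem_dropLast hnd (by simp) (by rw [hg, ← hwb]; exact hd)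

end Phylo

namespace Phylo
variable {α : Type*} {S : α → α → Prop} {p q : List α} {a b c d w : α}

lemma IsPth.snoc (h : IsPth S p a b) (hbc : S b c) : IsPth S (p ++ [c]) a c := by
  obtain ⟨t, rfl⟩ := h.exists_cons
  refine ⟨by simp, by simp, ?_, ?_⟩
  · exact List.getLast?_concat
  · rw [List.Chain', List.isChain_append]
    refine ⟨h.2.2.2, by simp, ?_⟩
    intro x hx y hy
    simp at hy
    subst hy
    have h2 := h.2.2.1
    rw [h2] at hx
    simp at hx
    subst hx
    exact hbc

lemma IsPth.append (h : IsPth S p a b) (h' : IsPth S q c d) (hbc : S b c) :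
    IsPth S (p ++ q) a d := by
  obtain ⟨t, rfl⟩ := h.exists_cons
  obtain ⟨s, rfl⟩ := h'.exists_cons
  refine ⟨by simp, by simp, ?_, ?_⟩
  · rw [List.getLast?_append_of_ne_nil _ (by simp)]
    exact h'.2.2.1
  · rw [List.Chain', List.isChain_append]
    refine ⟨h.2.2.2, h'.2.2.2, ?_⟩
    intro x hx y hy
    simp at hy
    have h2 := h.2.2.1
    rw [h2] at hx
    simp at hx
    subst hx
    rw [← hy]
    exact hbc

lemma reach_to_path (h : Relation.ReflTransGen S a b) : ∃ p, IsPth S p a b := by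
  induction h with
  | refl => exact ⟨[a], isPth_singleton a⟩
  | tail _ hstep ih =>
    obtain ⟨p, hp⟩ := ih
    exact ⟨p ++ [_], hp.snoc hstep⟩

lemma IsPth.suffix (h : IsPth S p a b) (hw : w ∈ p) :
    ∃ q, IsPth S q w b ∧ (∀ x ∈ q, x ∈ p) ∧ q.length ≤ p.length ∧
      (w ≠ a → q.length < p.length) := by
  induction p generalizing a with
  | nil => simp at hw
  | cons x t ih =>
    obtain ⟨t', het⟩ := h.exists_cons
    have hxa : x = a := by injection het
    subst hxa
    rcases List.mem_cons.mp hw with rfl | hw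
    · exact ⟨w :: t, h, fun x hx => hx, le_rfl, fun hne => absurd rfl hne⟩
    · have htne : t ≠ [] := by rintro rfl; simp at hw
      have hpt : IsPth S t (t.head htne) b := by
        refine ⟨htne, List.head?_eq_head htne, ?_, h.2.2.2.tail⟩
        have hgl := h.2.2.1
        cases t with
        | nil => exact absurd rfl htne
        | cons y s =>
          rwa [List.getLast?_cons_cons] at hgl
      obtain ⟨q, hq, hsub, hlen, _⟩ := ih hpt hw
      refine ⟨q, hq, fun x hx => List.mem_cons_of_mem _ (hsub x hx), ?_, ?_⟩
      · simpa using Nat.le_succ_of_le hlen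
      · intro _
        simpa using Nat.lt_succ_of_le hlen

end Phylo

namespace Phylo
variable {α : Type*} {S : α → α → Prop} {p q : List α} {a b c d w : α}

lemma interior_append {A B : List α} (hA : A ≠ []) (hB : B ≠ []) :
    interior (A ++ B) = A.tail ++ B.dropLast := by
  rw [interior, List.tail_append_of_ne_nil hA, List.dropLast_append_of_ne_nil hB]

lemma interior_map {f : α → β} {l : List α} : interior (l.map f) = (interior l).map f := by
  rw [interior, interior, ← List.map_tail, List.map_dropLast]

lemma chain'_strengthen {S' : α → α → Prop} (h : List.Chain' S p)
    (himp : ∀ x ∈ p, ∀ y ∈ p, S x y → S' x y) : List.Chain' S' p := by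
  induction p with
  | nil => simp [List.Chain']
  | cons x t ih =>
    cases t with
    | nil => simp [List.Chain']
    | cons y s =>
      rw [List.Chain', List.isChain_cons_cons] at h ⊢
      exact ⟨himp x (by simp) y (by simp) h.1,
        ih h.2 (fun u hu v hv huv => himp u (by simp [hu]) v (by simp [hv]) huv)⟩

lemma dropLast_succ (h : List.Chain' S p) (hw : w ∈ p.dropLast) : ∃ t, S w t := by
  induction p with
  | nil => simp at hw
  | cons x t ih =>
    cases t with
    | nil => simp at hw
    | cons y s =>
      rw [List.Chain', List.isChain_cons_cons] at h
      rcases List.mem_cons.mp (by simpa using hw) with rfl | hw'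
      · exact ⟨y, h.1⟩
      · exact ih h.2 hw'

lemma IsPth.two_le_length (h : IsPth S p a b) (hab : a ≠ b) : 2 ≤ p.length := by
  obtain ⟨t, rfl⟩ := h.exists_cons
  cases t with
  | nil =>
    have := h.2.2.1
    simp at this
    exact absurd this hab
  | cons y s => simp

lemma IsPth.dropLast_path (h : IsPth S p a b) (hab : a ≠ b) :
    ∃ m, IsPth S p.dropLast a m ∧ S m b ∧ p = p.dropLast ++ [b] := by
  have h2 := h.two_le_length hab
  obtain ⟨A, hA⟩ : ∃ A, A = p.dropLast := ⟨_, rfl⟩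
  have hne : A ≠ [] := by
    rw [hA]; cases p with
    | nil => simp at h2
    | cons x t => cases t with
      | nil => simp at h2
      | cons y s => simp
  have heq : A ++ [b] = p := by
    rw [hA, ← h.getLast_eq]; exact List.dropLast_append_getLast h.1
  have hh : A.head? = some a := by
    have hp := h.2.1
    rw [← heq, List.head?_append_of_ne_nil _ hne] at hp
    exact hp
  have hch : List.Chain' S p := h.2.2.2
  rw [← heq, List.Chain', List.isChain_append] at hch
  refine ⟨A.getLast hne, ?_, ?_, by rw [hA] at heq; exact heq.symm⟩
  · exact hA ▸ ⟨hne, hh, List.getLast?_eq_getLast hne, hch.1⟩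
  · exact hch.2.2 _ (List.getLast?_eq_getLast hne) b (by simp)

lemma IsPth.tail_path (h : IsPth S p a b) (hab : a ≠ b) :
    ∃ m, S a m ∧ IsPth S p.tail m b := by
  obtain ⟨t, rfl⟩ := h.exists_cons
  have htne : t ≠ [] := by
    rintro rfl
    have := h.2.2.1; simp at this; exact hab this
  refine ⟨t.head htne, ?_, htne, List.head?_eq_head htne, ?_, h.2.2.2.tail⟩
  · have hc := h.2.2.2
    cases t with
    | nil => exact absurd rfl htne
    | cons y s => exact (List.isChain_cons_cons.mp hc).1
  · have hgl := h.2.2.1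
    cases t with
    | nil => exact absurd rfl htne
    | cons y s => rwa [List.getLast?_cons_cons] at hgl

end Phylo

namespace Phylo

def IsPhyloNet' {V : Type*} (R : V → V → Prop) : Prop :=
  (∀ v, ¬ Relation.TransGen R v v) ∧
  (∃! r, inDeg R r = 0) ∧
  (∀ v : V, (inDeg R v = 0 ∧ outDeg R v = 2) ∨ (inDeg R v = 1 ∧ outDeg R v = 2) ∨
    (inDeg R v = 2 ∧ outDeg R v = 1) ∨ (inDeg R v = 1 ∧ outDeg R v = 0))

variable {V : Type*} [Fintype V] {R : V → V → Prop} {u v w a b : V}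

lemma not_leaf_of_arc (h : R v w) : ¬ IsLf R v := by
  intro hl
  have : ({w | R v w} : Set V) = ∅ := (Set.ncard_eq_zero (Set.toFinite _)).mp hl
  exact absurd (this ▸ h : w ∈ (∅ : Set V)) (by simp)

lemma IsLf.no_arc (hl : IsLf R v) (h : R v w) : False := not_leaf_of_arc h hl

lemma IsLf.reach_eq (hl : IsLf R v) (h : Relation.ReflTransGen R v w) : w = v := by
  rcases h.cases_head with rfl | ⟨c, hc, -⟩
  · rfl
  · exact absurd hc (fun hc => hl.no_arc hc)

lemma no_cycle (hacyc : ∀ v, ¬ Relation.TransGen R v v)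
    (h1 : Relation.ReflTransGen R a b) (h2 : R b v) (h3 : Relation.ReflTransGen R v a) :
    False :=
  hacyc a ((Relation.TransGen.tail' h1 h2).trans_left h3)

lemma reach_antisymm (hacyc : ∀ v, ¬ Relation.TransGen R v v)
    (h1 : Relation.ReflTransGen R a b) (h2 : Relation.ReflTransGen R b a) : a = b := by
  rcases h1.cases_head with rfl | ⟨c, hc, hcb⟩
  · rfl
  · exact absurd (Relation.TransGen.head' hc (hcb.trans h2)) (hacyc a)

lemma arc_ne (hacyc : ∀ v, ¬ Relation.TransGen R v v) (h : R a b) : a ≠ b := by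
  rintro rfl; exact hacyc a (Relation.TransGen.single h)

end Phylo

namespace Phylo
set_option linter.unusedSectionVars false
variable {V : Type*} [Fintype V] {R : V → V → Prop} {u v w a b : V}

lemma parent_of_indeg_ne_zero (h : inDeg R v ≠ 0) : ∃ u, R u v :=
  Set.nonempty_of_ncard_ne_zero h

lemma parent_unique (h : inDeg R v = 1) (h1 : R u v) (h2 : R w v) : u = w := by
  obtain ⟨x, hx⟩ := Set.ncard_eq_one.mp h
  have e1 : u ∈ ({w | R w v} : Set V) := h1
  have e2 : w ∈ ({w | R w v} : Set V) := h2
  rw [hx] at e1 e2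
  simp at e1 e2
  rw [e1, e2]

lemma IsLf.indeg_one (hnet : IsPhyloNet' R) (hl : IsLf R v) : inDeg R v = 1 := by
  rcases hnet.2.2 v with ⟨-, h⟩ | ⟨h, -⟩ | ⟨-, h⟩ | ⟨h, -⟩
  all_goals first
    | exact h
    | (exact absurd hl (by rw [IsLf, h]; omega))

lemma root_spec (hnet : IsPhyloNet' R) :
    ∃ r, inDeg R r = 0 ∧ outDeg R r = 2 ∧ ∀ v, inDeg R v = 0 → v = r := by
  obtain ⟨r, hr, hu⟩ := hnet.2.1
  refine ⟨r, hr, ?_, hu⟩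
  rcases hnet.2.2 r with ⟨-, h⟩ | ⟨h, -⟩ | ⟨h, -⟩ | ⟨h, -⟩
  · exact h
  all_goals omega

lemma parent_anc_ssubset (hacyc : ∀ v, ¬ Relation.TransGen R v v) (h : R u v) :
    {w | Relation.ReflTransGen R w u} ⊂ {w | Relation.ReflTransGen R w v} := by
  constructor
  · exact fun w hw => hw.tail h
  · intro hsub
    have : v ∈ {w | Relation.ReflTransGen R w u} := hsub (Set.mem_setOf.mpr .refl)
    exact no_cycle hacyc this h .refl

lemma reach_root (hnet : IsPhyloNet' R) :
    ∃ r, inDeg R r = 0 ∧ outDeg R r = 2 ∧ ∀ v, Relation.ReflTransGen R r v := by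
  obtain ⟨r, hr0, hr2, hu⟩ := root_spec hnet
  refine ⟨r, hr0, hr2, ?_⟩
  have key : ∀ (n : ℕ) (v : V), ({w | Relation.ReflTransGen R w v}).ncard ≤ n →
      Relation.ReflTransGen R r v := by
    intro n
    induction n with
    | zero =>
      intro v hv
      exfalso
      have : ({w | Relation.ReflTransGen R w v}).ncard ≠ 0 := by
        intro h0
        have := (Set.ncard_eq_zero (Set.toFinite _)).mp h0
        exact absurd (this ▸ (Set.mem_setOf.mpr .refl : v ∈ {w | Relation.ReflTransGen R w v}))
          (by simp)
      omega
    | succ n ih =>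
      intro v hv
      by_cases h0 : inDeg R v = 0
      · rw [hu v h0]
      · obtain ⟨u, hu'⟩ := parent_of_indeg_ne_zero h0
        have hlt := Set.ncard_lt_ncard (parent_anc_ssubset hnet.1 hu') (Set.toFinite _)
        exact (ih u (by omega)).tail hu'
  exact fun v => key _ v le_rfl

end Phylo

namespace Phylo
set_option linter.unusedSectionVars false

variable {V : Type*}

def Eb (R : V → V → Prop) (u₀ v₀ : V) : V → V → Prop :=
  fun p q => (R p q ∨ R q p) ∧ ¬((p = u₀ ∧ q = v₀) ∨ (p = v₀ ∧ q = u₀))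

variable [Fintype V] {R : V → V → Prop} {u v w a b u₀ v₀ : V}

lemma Eb_symm : Symmetric (Eb R u₀ v₀) := by
  intro p q ⟨h1, h2⟩
  exact ⟨h1.symm, fun h => h2 (by tauto)⟩

lemma Eb_reach_of_reach (hacyc : ∀ v, ¬ Relation.TransGen R v v) (harc : R u₀ v₀)
    (h : Relation.ReflTransGen R v₀ w) : Relation.ReflTransGen (Eb R u₀ v₀) v₀ w := by
  induction h with
  | refl => exact .refl
  | @tail c d hc hstep ih =>
    refine ih.tail ⟨Or.inl hstep, ?_⟩
    rintro (⟨he1, he2⟩ | ⟨he1, he2⟩)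
    · exact no_cycle hacyc (he1 ▸ hc) harc .refl
    · exact hacyc u₀ ((Relation.TransGen.single harc).tail (he2 ▸ he1 ▸ hstep))

lemma Eb_reach_of_not_below (hacyc : ∀ v, ¬ Relation.TransGen R v v) (harc : R u₀ v₀)
    {s : V} (h : Relation.ReflTransGen R s w) :
    ¬ Relation.ReflTransGen R v₀ w → Relation.ReflTransGen (Eb R u₀ v₀) s w := by
  induction h with
  | refl => exact fun _ => .refl
  | @tail c d hc hstep ih =>
    intro hw
    have hnc : ¬ Relation.ReflTransGen R v₀ c := fun h => hw (h.tail hstep)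
    refine (ih hnc).tail ⟨Or.inl hstep, ?_⟩
    rintro (⟨he1, he2⟩ | ⟨he1, he2⟩)
    · exact hw (by rw [he2])
    · exact hnc (by rw [he1])

lemma Eb_all_of_bridge_conn (hnet : IsPhyloNet' R) (harc : R u₀ v₀)
    (hE : Relation.ReflTransGen (Eb R u₀ v₀) u₀ v₀) :
    ∀ a b, Relation.ReflTransGen (Eb R u₀ v₀) a b := by
  have hacyc := hnet.1
  obtain ⟨r, -, -, hr⟩ := reach_root hnet
  have key : ∀ c, Relation.ReflTransGen (Eb R u₀ v₀) r c := by
    intro c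
    have hrc := hr c
    induction hrc with
    | refl => exact .refl
    | @tail c d hc hstep ih =>
      by_cases hb : (c = u₀ ∧ d = v₀) ∨ (c = v₀ ∧ d = u₀)
      · rcases hb with ⟨he1, he2⟩ | ⟨he1, he2⟩
        · have h1 : Relation.ReflTransGen (Eb R u₀ v₀) r u₀ :=
            Eb_reach_of_not_below hacyc harc (he1 ▸ hc)
              (fun h => no_cycle hacyc h harc .refl)
          rw [he2]
          exact h1.trans hE
        · exact absurd ((Relation.TransGen.single harc).tail (he2 ▸ he1 ▸ hstep))
            (hacyc u₀)
      · exact ih.tail ⟨Or.inl hstep, hb⟩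
  intro a b
  exact ((fun h => (@Relation.ReflTransGen.stdSymm _ _ ⟨fun _ _ h => Eb_symm h⟩).symm _ _ h) (key a)).trans (key b)

end Phylo

namespace Phylo
set_option linter.unusedSectionVars false
variable {V : Type*} [Fintype V] {R : V → V → Prop} {u v w a b u₀ v₀ : V}

lemma CutArc.not_all (hca : CutArc R u₀ v₀) :
    ¬ (∀ a b, Relation.ReflTransGen (Eb R u₀ v₀) a b) := by
  obtain ⟨-, a, b, hab⟩ := hca
  exact fun h => hab (h a b)

lemma CutArc.unique_parent (hnet : IsPhyloNet' R) (hca : CutArc R u₀ v₀)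
    (hd : R w v₀) : w = u₀ := by
  have hacyc := hnet.1
  by_contra hne
  apply hca.not_all
  apply Eb_all_of_bridge_conn hnet hca.1
  obtain ⟨r, -, -, hr⟩ := reach_root hnet
  have h1 : Relation.ReflTransGen (Eb R u₀ v₀) r u₀ :=
    Eb_reach_of_not_below hacyc hca.1 (hr u₀) (fun h => no_cycle hacyc h hca.1 .refl)
  have h2 : Relation.ReflTransGen (Eb R u₀ v₀) r w :=
    Eb_reach_of_not_below hacyc hca.1 (hr w)
      (fun h => hacyc v₀ (Relation.TransGen.tail' h hd))
  have h3 : Eb R u₀ v₀ w v₀ := by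
    refine ⟨Or.inl hd, ?_⟩
    rintro (⟨he1, -⟩ | ⟨he1, -⟩)
    · exact hne he1
    · exact hacyc v₀ (Relation.TransGen.single (he1 ▸ hd))
  exact ((fun h => (@Relation.ReflTransGen.stdSymm _ _ ⟨fun _ _ h => Eb_symm h⟩).symm _ _ h) h1).trans (h2.tail h3)

end Phylo

namespace Phylo
set_option linter.unusedSectionVars false
variable {V : Type*} [Fintype V] {R : V → V → Prop} {u v w a b u₀ v₀ s t : V}

lemma CutArc.entry (hnet : IsPhyloNet' R) (hca : CutArc R u₀ v₀)
    (hd : R a b) (hb : Relation.ReflTransGen R v₀ b)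
    (hna : ¬ Relation.ReflTransGen R v₀ a) : b = v₀ := by
  have hacyc := hnet.1
  by_contra hne
  apply hca.not_all
  apply Eb_all_of_bridge_conn hnet hca.1
  obtain ⟨r, -, -, hr⟩ := reach_root hnet
  have h1 : Relation.ReflTransGen (Eb R u₀ v₀) r u₀ :=
    Eb_reach_of_not_below hacyc hca.1 (hr u₀) (fun h => no_cycle hacyc h hca.1 .refl)
  have h2 : Relation.ReflTransGen (Eb R u₀ v₀) r a :=
    Eb_reach_of_not_below hacyc hca.1 (hr a) hna
  have h3 : Eb R u₀ v₀ a b := by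
    refine ⟨Or.inl hd, ?_⟩
    rintro (⟨-, he2⟩ | ⟨he1, -⟩)
    · exact hne he2
    · exact hna (by rw [he1])
  have h4 : Relation.ReflTransGen (Eb R u₀ v₀) v₀ b := Eb_reach_of_reach hacyc hca.1 hb
  exact ((fun h => (@Relation.ReflTransGen.stdSymm _ _ ⟨fun _ _ h => Eb_symm h⟩).symm _ _ h) h1).trans
    ((h2.tail h3).trans ((fun h => (@Relation.ReflTransGen.stdSymm _ _ ⟨fun _ _ h => Eb_symm h⟩).symm _ _ h) h4))

lemma CutArc.cross_path (hnet : IsPhyloNet' R) (hca : CutArc R u₀ v₀)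
    {p : List V} (hp : IsPth R p s t) (ht : Relation.ReflTransGen R v₀ t)
    (hs : ¬ Relation.ReflTransGen R v₀ s) : v₀ ∈ p := by
  induction p generalizing s with
  | nil => exact absurd hp.1 (by simp)
  | cons x rest ih =>
    obtain ⟨t', het⟩ := hp.exists_cons
    have hxs : x = s := by injection het
    subst hxs
    cases rest with
    | nil =>
      have := hp.2.2.1
      simp at this
      subst this
      exact absurd ht hs
    | cons m rest' =>
      have harc : R x m := (List.isChain_cons_cons.mp hp.2.2.2).1
      have hpt : IsPth R (m :: rest') m t := by
        refine ⟨by simp, by simp, ?_, hp.2.2.2.tail⟩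
        have := hp.2.2.1
        rwa [List.getLast?_cons_cons] at this
      by_cases hm : Relation.ReflTransGen R v₀ m
      · have : m = v₀ := hca.entry hnet harc hm hs
        simp [this]
      · exact List.mem_cons_of_mem _ (ih hpt hm)

lemma CutArc.crossR (hnet : IsPhyloNet' R) (hca : CutArc R u₀ v₀)
    (h : Relation.ReflTransGen R s t) (ht : Relation.ReflTransGen R v₀ t) :
    ¬ Relation.ReflTransGen R v₀ s → Relation.ReflTransGen R s u₀ := by
  induction h using Relation.ReflTransGen.head_induction_on with
  | refl => exact fun hs => absurd ht hs
  | @head c m hcm hmt ih =>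
    intro hs
    by_cases hm : Relation.ReflTransGen R v₀ m
    · have : m = v₀ := hca.entry hnet hcm hm hs
      have : c = u₀ := hca.unique_parent hnet (this ▸ hcm)
      rw [this]
    · exact (ih hm).head hcm

end Phylo

namespace Phylo
set_option linter.unusedSectionVars false
variable {V : Type*} [Fintype V] {R : V → V → Prop} {u v w a b u₀ v₀ s t : V}

lemma leaf_cut (hnet : IsPhyloNet' R) (hl : IsLf R v) : ∃ u, R u v ∧ CutArc R u v := by
  have hacyc := hnet.1
  have h1 : inDeg R v = 1 := hl.indeg_one hnet
  obtain ⟨p, hp⟩ := parent_of_indeg_ne_zero (R := R) (v := v) (by omega)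
  refine ⟨p, hp, hp, v, ?_⟩
  obtain ⟨r, hr0, hr2, -⟩ := reach_root hnet
  refine ⟨r, fun hreach => ?_⟩
  have hkey : ∀ c, Relation.ReflTransGen (Eb R p v) v c → c = v := by
    intro c hc
    rcases hc.cases_head with rfl | ⟨d, hd, -⟩
    · rfl
    · exfalso
      obtain ⟨hor, hnp⟩ := hd
      rcases hor with h | h
      · exact hl.no_arc h
      · exact hnp (Or.inr ⟨rfl, parent_unique h1 h hp⟩)
  have hrv : r = v := hkey r hreach
  have : outDeg R v = 0 := hl
  rw [← hrv] at this
  omega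

lemma exists_highest_cut (hnet : IsPhyloNet' R) :
    ∀ (n : ℕ) (u v : V), ({w | Relation.ReflTransGen R w u}).ncard ≤ n →
      CutArc R u v → ∃ u' v', HighestCutArc R u' v' ∧ Relation.ReflTransGen R v' v := by
  have hacyc := hnet.1
  intro n
  induction n with
  | zero =>
    intro u v hn hc
    exfalso
    have hmem : u ∈ {w | Relation.ReflTransGen R w u} := Set.mem_setOf.mpr .refl
    have : ({w | Relation.ReflTransGen R w u}).ncard ≠ 0 := by
      intro h0
      have := (Set.ncard_eq_zero (Set.toFinite _)).mp h0
      rw [this] at hmem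
      exact hmem
    omega
  | succ n ih =>
    intro u v hn hc
    by_cases hh : HighestCutArc R u v
    · exact ⟨u, v, hh, .refl⟩
    · have hex : ∃ u2 v2, CutArc R u2 v2 ∧ Relation.ReflTransGen R v2 u := by
        by_contra hno
        push_neg at hno
        exact hh ⟨hc, fun u' v' hc' hr => hno u' v' hc' hr⟩
      obtain ⟨u2, v2, hc2, hr2⟩ := hex
      have hss : {w | Relation.ReflTransGen R w u2} ⊂ {w | Relation.ReflTransGen R w u} := by
        constructor
        · exact fun w hw => (hw.tail hc2.1).trans hr2
        · intro hsub
          have : u ∈ {w | Relation.ReflTransGen R w u2} := hsub (Set.mem_setOf.mpr .refl)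
          exact no_cycle hacyc this hc2.1 hr2
      have hlt := Set.ncard_lt_ncard hss (Set.toFinite _)
      obtain ⟨u', v', hh', hr'⟩ := ih u2 v2 (by omega) hc2
      exact ⟨u', v', hh', hr'.trans ((hr2.tail hc.1))⟩

lemma leaf_below_highest (hnet : IsPhyloNet' R) (hl : IsLf R v) :
    ∃ u' v', HighestCutArc R u' v' ∧ Relation.ReflTransGen R v' v := by
  obtain ⟨p, hp, hc⟩ := leaf_cut hnet hl
  exact exists_highest_cut hnet _ p v le_rfl hc

lemma highest_disjoint (hnet : IsPhyloNet' R) {u₁ v₁ u₂ v₂ : V}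
    (h1 : HighestCutArc R u₁ v₁) (h2 : HighestCutArc R u₂ v₂)
    (hne : (u₁, v₁) ≠ (u₂, v₂)) (hw1 : Relation.ReflTransGen R v₁ w)
    (hw2 : Relation.ReflTransGen R v₂ w) : False := by
  have hacyc := hnet.1
  by_cases ha : Relation.ReflTransGen R v₁ v₂
  · by_cases hb : Relation.ReflTransGen R v₂ v₁
    · have hv : v₁ = v₂ := reach_antisymm hacyc ha hb
      have hu : u₁ = u₂ := h2.1.unique_parent hnet (hv ▸ h1.1.1)
      exact hne (by rw [hu, hv])
    · have := h2.1.crossR hnet hw1 hw2 hb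
      exact h2.2 u₁ v₁ h1.1 this
  · have := h1.1.crossR hnet hw2 hw1 ha
    exact h1.2 u₂ v₂ h2.1 this

end Phylo

namespace Phylo
set_option linter.unusedSectionVars false
variable {V : Type*} [Fintype V] {R : V → V → Prop} {u v w a b u₀ v₀ s t : V}

lemma path_eq_singleton {p : List V} (hp : IsPth R p a a) (hnd : p.Nodup) :
    p = [a] := by
  obtain ⟨t, rfl⟩ := hp.exists_cons
  cases t with
  | nil => rfl
  | cons y s =>
    exfalso
    have hg : (a :: y :: s).getLast (by simp) = a := hp.getLast_eq
    have hmem : (a :: y :: s).getLast (by simp) ∈ y :: s := by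
      rw [List.getLast_cons (by simp)]
      exact List.getLast_mem (by simp)
    rw [hg] at hmem
    exact (List.nodup_cons.mp hnd).1 hmem

lemma leaf_not_start {p : List V} (hl : IsLf R s) (hp : IsPth R p s t) : t = s :=
  hl.reach_eq (hp.reach hp.last_mem)

lemma paths_to_leaf (hnet : IsPhyloNet' R) {ℓ : V} (hl : IsLf R ℓ)
    {p q : List V} (hp : IsPth R p u ℓ) (hq : IsPth R q v ℓ)
    (hdis : IntDisj p q) (hu : u ≠ ℓ) (hv : v ≠ ℓ) (huv : u ≠ v) : False := by
  have hacyc := hnet.1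
  have hideg : inDeg R ℓ = 1 := hl.indeg_one hnet
  obtain ⟨mp, hmp, hmpl, hpeq⟩ := hp.dropLast_path hu
  obtain ⟨mq, hmq, hmql, hqeq⟩ := hq.dropLast_path hv
  have hmm : mp = mq := parent_unique hideg hmpl hmql
  subst hmm
  have hmp_mem_p : mp ∈ p := (List.dropLast_sublist p).subset hmp.last_mem
  have hmp_mem_q : mp ∈ q := (List.dropLast_sublist q).subset hmq.last_mem
  have hmpne : mp ≠ ℓ := arc_ne hacyc hmpl
  rcases hp.mem_decomp hmp_mem_p with he | he | hint
  · rcases hq.mem_decomp hmp_mem_q with he2 | he2 | hint2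
    · exact huv (he.symm.trans he2)
    · exact hmpne he2
    · exact hdis.2 mp hint2 hmp_mem_p
  · exact hmpne he
  · exact hdis.1 mp hint hmp_mem_q

lemma xyx_false (hnet : IsPhyloNet' R) {x y : V} (hlx : IsLf R x)
    (hxy : x ≠ y) (hct : ConsistentTrip R x y x) : False := by
  obtain ⟨u, v, p1, p2, p3, p4, huv, hp1, hp2, hp3, hp4, h12, h13, h14, h23, h24, h34⟩ := hct
  have hux : u ≠ x := by
    rintro rfl
    exact hxy (leaf_not_start hlx hp2).symm
  have hvx : v ≠ x := by
    rintro rfl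
    exact huv (leaf_not_start hlx hp3)
  exact paths_to_leaf hnet hlx hp1 hp4 h14 hux hvx (fun h => huv h)

lemma xyy_false (hnet : IsPhyloNet' R) {x y : V} (hly : IsLf R y)
    (hxy : x ≠ y) (hct : ConsistentTrip R x y y) : False := by
  obtain ⟨u, v, p1, p2, p3, p4, huv, hp1, hp2, hp3, hp4, h12, h13, h14, h23, h24, h34⟩ := hct
  have huy : u ≠ y := by
    rintro rfl
    exact hxy (leaf_not_start hly hp1)
  have hvy : v ≠ y := by
    rintro rfl
    exact huy (leaf_not_start hly hp3)
  exact paths_to_leaf hnet hly hp2 hp4 h24 huy hvy huv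

lemma branch (hnet : IsPhyloNet' R) {a c : V} (hne : a ≠ c) :
    ∃ v p q, IsPth R p v a ∧ IsPth R q v c ∧ IntDisj p q := by
  have hacyc := hnet.1
  obtain ⟨r, -, -, hr⟩ := reach_root hnet
  obtain ⟨p0, hp0⟩ := reach_to_path (hr a)
  obtain ⟨q0, hq0⟩ := reach_to_path (hr c)
  have hN : ({n | ∃ v p q, IsPth R p v a ∧ IsPth R q v c ∧
      p.length + q.length = n} : Set ℕ).Nonempty := ⟨_, r, p0, q0, hp0, hq0, rfl⟩
  obtain ⟨v, p, q, hp, hq, hlen⟩ := Nat.sInf_mem hN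
  refine ⟨v, p, q, hp, hq, ?_, ?_⟩
  · intro w hwint hwq
    obtain ⟨p', hp', -, -, hplt⟩ := hp.suffix (interior_subset hwint)
    obtain ⟨q', hq', -, hqlen, -⟩ := hq.suffix hwq
    have hwne : w ≠ v := (hp.int_ne hacyc hwint).2.1
    have hmem : p'.length + q'.length ∈ {n | ∃ v p q, IsPth R p v a ∧ IsPth R q v c ∧
        p.length + q.length = n} := ⟨w, p', q', hp', hq', rfl⟩
    have hlow := Nat.sInf_le hmem
    have := hplt hwne
    omega
  · intro w hwint hwp
    obtain ⟨q', hq', -, -, hqlt⟩ := hq.suffix (interior_subset hwint)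
    obtain ⟨p', hp', -, hplen, -⟩ := hp.suffix hwp
    have hwne : w ≠ v := (hq.int_ne hacyc hwint).2.1
    have hmem : p'.length + q'.length ∈ {n | ∃ v p q, IsPth R p v a ∧ IsPth R q v c ∧
        p.length + q.length = n} := ⟨w, p', q', hp', hq', rfl⟩
    have hlow := Nat.sInf_le hmem
    have := hqlt hwne
    omega

lemma cross_two_paths (hnet : IsPhyloNet' R) (hca : CutArc R u₀ v₀)
    {p q : List V} {u1 u2 e1 e2 : V}
    (hp : IsPth R p u1 e1) (hq : IsPth R q u2 e2)
    (he1 : Relation.ReflTransGen R v₀ e1) (he2 : Relation.ReflTransGen R v₀ e2)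
    (hu1 : ¬ Relation.ReflTransGen R v₀ u1) (hu2 : ¬ Relation.ReflTransGen R v₀ u2)
    (hne : v₀ ≠ e1) (hdis : IntDisj p q) : False := by
  have h1 := hca.cross_path hnet hp he1 hu1
  have h2 := hca.cross_path hnet hq he2 hu2
  rcases hp.mem_decomp h1 with he | he | hint
  · exact hu1 (he ▸ Relation.ReflTransGen.refl)
  · exact hne he
  · exact hdis.1 v₀ hint h2

end Phylo

namespace Phylo

set_option linter.unusedSectionVars false
variable {V V' : Type*} [Fintype V] [Fintype V'] {R : V → V → Prop}
  {R' : V' → V' → Prop} {g : V' → V × V} {s t : V} {s' t' : V'}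

lemma pth_inr {c : V'} (hc : IsLf R' c) {p : List V} (hp : IsPth R p s t)
    (hs : Relation.ReflTransGen R ((g c).2) s) :
    IsPth (ExpandArc R' R g) (p.map Sum.inr) (Sum.inr s) (Sum.inr t) := by
  refine ⟨by simp [hp.1], ?_, ?_, ?_⟩
  · rw [List.head?_map, hp.2.1]; rfl
  · rw [List.getLast?_map, hp.2.2.1]; rfl
  · rw [List.Chain', List.isChain_map]
    refine chain'_strengthen hp.2.2.2 (fun a ha b hb hab => ?_)
    exact ⟨hab, c, hc, hs.trans (hp.reach ha)⟩

lemma pth_inl {q : List V'} (hq : IsPth R' q s' t') (ht : ¬ IsLf R' t') :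
    IsPth (ExpandArc R' R g) (q.map Sum.inl) (Sum.inl s') (Sum.inl t') := by
  refine ⟨by simp [hq.1], ?_, ?_, ?_⟩
  · rw [List.head?_map, hq.2.1]; rfl
  · rw [List.getLast?_map, hq.2.2.1]; rfl
  · rw [List.Chain', List.isChain_map]
    refine chain'_strengthen hq.2.2.2 (fun a ha b hb hab => ⟨hab, ?_⟩)
    have : b ∈ q.dropLast ∨ b = q.getLast hq.1 := by
      have heq := List.dropLast_append_getLast hq.1
      rw [← heq] at hb
      rcases List.mem_append.mp hb with h | h
      · exact Or.inl h
      · simp at h; exact Or.inr h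
    rcases this with h | h
    · obtain ⟨z, hz⟩ := dropLast_succ hq.2.2.2 h
      exact not_leaf_of_arc hz
    · rw [h, hq.getLast_eq]; exact ht

lemma pth_expand {π : List V'} {d : V'} (hπ : IsPth R' π s' d) (hd : IsLf R' d)
    (hsd : s' ≠ d) {r : List V} (hr : IsPth R r ((g d).2) t) :
    IsPth (ExpandArc R' R g) (π.dropLast.map Sum.inl ++ r.map Sum.inr)
      (Sum.inl s') (Sum.inr t) := by
  obtain ⟨m, hm, hmd, hpeq⟩ := hπ.dropLast_path hsd
  have h1 : IsPth (ExpandArc R' R g) (π.dropLast.map Sum.inl) (Sum.inl s') (Sum.inl m) :=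
    pth_inl hm (not_leaf_of_arc hmd)
  have h2 : IsPth (ExpandArc R' R g) (r.map Sum.inr) (Sum.inr ((g d).2)) (Sum.inr t) :=
    pth_inr hd hr Relation.ReflTransGen.refl
  exact h1.append h2 ⟨d, hmd, hd, rfl⟩

end Phylo

namespace Phylo
set_option linter.unusedSectionVars false
variable {α β : Type*} {S : α → α → Prop} {p q : List α} {a b : α}

lemma IntDisj.symm (h : IntDisj p q) : IntDisj q p := ⟨h.2, h.1⟩

lemma intdisj_map {f : α → β} (hf : Function.Injective f) (h : IntDisj p q) :
    IntDisj (p.map f) (q.map f) := by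
  constructor
  · intro w hw hw2
    rw [interior_map] at hw
    obtain ⟨w0, hw0, rfl⟩ := List.mem_map.mp hw
    obtain ⟨w1, hw1, he⟩ := List.mem_map.mp hw2
    rw [hf he] at hw1
    exact h.1 w0 hw0 hw1
  · intro w hw hw2
    rw [interior_map] at hw
    obtain ⟨w0, hw0, rfl⟩ := List.mem_map.mp hw
    obtain ⟨w1, hw1, he⟩ := List.mem_map.mp hw2
    rw [hf he] at hw1
    exact h.2 w0 hw0 hw1

@[simp] lemma interior_singleton : interior [a] = ([] : List α) := rfl

@[simp] lemma interior_pair : interior [a, b] = ([] : List α) := rfl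

lemma IsPth.dropLast_ne_nil (h : IsPth S p a b) (hab : a ≠ b) : p.dropLast ≠ [] := by
  have h2 := h.two_le_length hab
  have : p.dropLast.length = p.length - 1 := by simp
  intro hc
  rw [hc] at this
  simp at this
  omega

lemma interior_glue {γ : Type*} {A : List α} {B : List β}
    {f : α → γ} {g' : β → γ} (hA : A ≠ []) (hB : B ≠ []) :
    interior (A.map f ++ B.map g') = A.tail.map f ++ B.dropLast.map g' := by
  rw [interior_append (by simpa) (by simpa), List.map_tail, List.map_dropLast]

end Phylo

namespace Phylo
set_option linter.unusedSectionVars false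
variable {V V' : Type*} [Fintype V] [Fintype V'] {R : V → V → Prop}
  {R' : V' → V' → Prop} {g : V' → V × V}

lemma case_xxx (hnetR : IsPhyloNet' R) (hnet' : IsPhyloNet' R') {a : V'}
    (hla : IsLf R' a) {x : V}
    (hxa : Relation.ReflTransGen R ((g a).2) x) :
    ConsistentTrip (ExpandArc R' R g) (Sum.inr x) (Sum.inr x) (Sum.inr x) := by
  by_cases hvx : (g a).2 = x
  · obtain ⟨pa, hpa⟩ := parent_of_indeg_ne_zero (R := R') (v := a)
      (by rw [hla.indeg_one hnet']; omega)
    have hpth : IsPth (ExpandArc R' R g) [Sum.inl pa, Sum.inr x] (Sum.inl pa) (Sum.inr x) := by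
      refine ⟨by simp, by simp, by simp, ?_⟩
      simp only [List.Chain', List.isChain_cons_cons, List.isChain_singleton, and_true]
      exact ⟨a, hpa, hla, hvx.symm⟩
    exact ⟨Sum.inr x, Sum.inl pa, [Sum.inr x], [Sum.inr x],
      [Sum.inl pa, Sum.inr x], [Sum.inl pa, Sum.inr x], by simp,
      isPth_singleton _, isPth_singleton _, hpth, hpth,
      ⟨by simp, by simp⟩, ⟨by simp, by simp⟩, ⟨by simp, by simp⟩,
      ⟨by simp, by simp⟩, ⟨by simp, by simp⟩, ⟨by simp, by simp⟩⟩
  · obtain ⟨w, hw, hwx⟩ : ∃ w, Relation.ReflTransGen R ((g a).2) w ∧ R w x := by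
      rcases Relation.ReflTransGen.cases_tail hxa with he | ⟨c, hc1, hc2⟩
      · exact absurd he.symm hvx
      · exact ⟨c, hc1, hc2⟩
    have hpth : IsPth (ExpandArc R' R g) [Sum.inr w, Sum.inr x] (Sum.inr w) (Sum.inr x) := by
      refine ⟨by simp, by simp, by simp, ?_⟩
      simp only [List.Chain', List.isChain_cons_cons, List.isChain_singleton, and_true]
      exact ⟨hwx, a, hla, hw⟩
    refine ⟨Sum.inr x, Sum.inr w, [Sum.inr x], [Sum.inr x],
      [Sum.inr w, Sum.inr x], [Sum.inr w, Sum.inr x], ?_,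
      isPth_singleton _, isPth_singleton _, hpth, hpth,
      ⟨by simp, by simp⟩, ⟨by simp, by simp⟩, ⟨by simp, by simp⟩,
      ⟨by simp, by simp⟩, ⟨by simp, by simp⟩, ⟨by simp, by simp⟩⟩
    simp only [ne_eq, Sum.inr.injEq]
    exact fun h => arc_ne hnetR.1 hwx h.symm

end Phylo

namespace Phylo
set_option linter.unusedSectionVars false
variable {V V' : Type*} {R : V → V → Prop} {R' : V' → V' → Prop} {g : V' → V × V}

lemma interior_expand_eq {π : List V'} {r : List V} (hπ : π.dropLast ≠ []) (hr : r ≠ []) :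
    interior (π.dropLast.map Sum.inl ++ r.map Sum.inr) =
      (interior π).map (Sum.inl : V' → V' ⊕ V) ++ r.dropLast.map Sum.inr := by
  rw [interior_glue hπ hr, interior, tail_dropLast]

lemma intdisj_glue_glue {πp πq : List V'} {rp rq : List V}
    (hπp : πp.dropLast ≠ []) (hrp : rp ≠ []) (hπq : πq.dropLast ≠ []) (hrq : rq ≠ [])
    (h1 : ∀ w ∈ interior πp, w ∉ πq) (h2 : ∀ w ∈ interior πq, w ∉ πp)
    (hr : ∀ w ∈ rp, w ∈ rq → False) :
    IntDisj (πp.dropLast.map Sum.inl ++ rp.map Sum.inr)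
            (πq.dropLast.map Sum.inl ++ rq.map (Sum.inr : V → V' ⊕ V)) := by
  constructor
  · intro w hw hmem
    rw [interior_expand_eq hπp hrp] at hw
    rcases List.mem_append.mp hw with hw | hw
    · obtain ⟨w0, hw0, rfl⟩ := List.mem_map.mp hw
      rcases List.mem_append.mp hmem with hm | hm
      · obtain ⟨w1, hw1, he⟩ := List.mem_map.mp hm
        simp at he
        exact h1 w0 hw0 (he ▸ (List.dropLast_sublist πq).subset hw1)
      · obtain ⟨w1, -, he⟩ := List.mem_map.mp hm
        simp at he
    · obtain ⟨w0, hw0, rfl⟩ := List.mem_map.mp hw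
      rcases List.mem_append.mp hmem with hm | hm
      · obtain ⟨w1, -, he⟩ := List.mem_map.mp hm
        simp at he
      · obtain ⟨w1, hw1, he⟩ := List.mem_map.mp hm
        simp at he
        exact hr w0 ((List.dropLast_sublist rp).subset hw0) (he ▸ hw1)
  · intro w hw hmem
    rw [interior_expand_eq hπq hrq] at hw
    rcases List.mem_append.mp hw with hw | hw
    · obtain ⟨w0, hw0, rfl⟩ := List.mem_map.mp hw
      rcases List.mem_append.mp hmem with hm | hm
      · obtain ⟨w1, hw1, he⟩ := List.mem_map.mp hm
        simp at he
        exact h2 w0 hw0 (he ▸ (List.dropLast_sublist πp).subset hw1)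
      · obtain ⟨w1, -, he⟩ := List.mem_map.mp hm
        simp at he
    · obtain ⟨w0, hw0, rfl⟩ := List.mem_map.mp hw
      rcases List.mem_append.mp hmem with hm | hm
      · obtain ⟨w1, -, he⟩ := List.mem_map.mp hm
        simp at he
      · obtain ⟨w1, hw1, he⟩ := List.mem_map.mp hm
        simp at he
        exact hr w1 hw1 (he ▸ (List.dropLast_sublist rq).subset hw0)

lemma intdisj_glue_inl {πp σ : List V'} {rp : List V}
    (hπp : πp.dropLast ≠ []) (hrp : rp ≠ [])
    (h1 : ∀ w ∈ interior πp, w ∉ σ) (h2 : ∀ w ∈ interior σ, w ∉ πp) :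
    IntDisj (πp.dropLast.map Sum.inl ++ rp.map (Sum.inr : V → V' ⊕ V))
            (σ.map Sum.inl) := by
  constructor
  · intro w hw hmem
    rw [interior_expand_eq hπp hrp] at hw
    rcases List.mem_append.mp hw with hw | hw
    · obtain ⟨w0, hw0, rfl⟩ := List.mem_map.mp hw
      obtain ⟨w1, hw1, he⟩ := List.mem_map.mp hmem
      simp at he
      exact h1 w0 hw0 (he ▸ hw1)
    · obtain ⟨w0, hw0, rfl⟩ := List.mem_map.mp hw
      obtain ⟨w1, -, he⟩ := List.mem_map.mp hmem
      simp at he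
  · intro w hw hmem
    rw [interior_map] at hw
    obtain ⟨w0, hw0, rfl⟩ := List.mem_map.mp hw
    rcases List.mem_append.mp hmem with hm | hm
    · obtain ⟨w1, hw1, he⟩ := List.mem_map.mp hm
      simp at he
      exact h2 w0 hw0 (he ▸ (List.dropLast_sublist πp).subset hw1)
    · obtain ⟨w1, -, he⟩ := List.mem_map.mp hm
      simp at he

lemma intdisj_glue_inr {πp : List V'} {rp m : List V}
    (hπp : πp.dropLast ≠ []) (hrp : rp ≠ [])
    (hr1 : ∀ w ∈ rp.dropLast, w ∉ m) (hr2 : ∀ w ∈ interior m, w ∉ rp) :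
    IntDisj (πp.dropLast.map Sum.inl ++ rp.map (Sum.inr : V → V' ⊕ V))
            (m.map Sum.inr) := by
  constructor
  · intro w hw hmem
    rw [interior_expand_eq hπp hrp] at hw
    rcases List.mem_append.mp hw with hw | hw
    · obtain ⟨w0, hw0, rfl⟩ := List.mem_map.mp hw
      obtain ⟨w1, -, he⟩ := List.mem_map.mp hmem
      simp at he
    · obtain ⟨w0, hw0, rfl⟩ := List.mem_map.mp hw
      obtain ⟨w1, hw1, he⟩ := List.mem_map.mp hmem
      simp at he
      exact hr1 w0 hw0 (he ▸ hw1)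
  · intro w hw hmem
    rw [interior_map] at hw
    obtain ⟨w0, hw0, rfl⟩ := List.mem_map.mp hw
    rcases List.mem_append.mp hmem with hm | hm
    · obtain ⟨w1, -, he⟩ := List.mem_map.mp hm
      simp at he
    · obtain ⟨w1, hw1, he⟩ := List.mem_map.mp hm
      simp at he
      exact hr2 w0 hw0 (he ▸ hw1)

lemma intdisj_inl_inr {σ : List V'} {m : List V} :
    IntDisj (σ.map (Sum.inl : V' → V' ⊕ V)) (m.map Sum.inr) := by
  constructor
  · intro w hw hmem
    rw [interior_map] at hw
    obtain ⟨w0, -, rfl⟩ := List.mem_map.mp hw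
    obtain ⟨w1, -, he⟩ := List.mem_map.mp hmem
    simp at he
  · intro w hw hmem
    rw [interior_map] at hw
    obtain ⟨w0, -, rfl⟩ := List.mem_map.mp hw
    obtain ⟨w1, -, he⟩ := List.mem_map.mp hmem
    simp at he

lemma intdisj_singleton {q : List α} {a : α} (h : ∀ w ∈ interior q, w ≠ a) :
    IntDisj [a] q := by
  refine ⟨by simp [interior], fun w hw hm => ?_⟩
  simp at hm
  exact h w hw hm

end Phylo

namespace Phylo
set_option linter.unusedSectionVars false
variable {V V' : Type*} [Fintype V] [Fintype V'] {R : V → V → Prop}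
  {R' : V' → V' → Prop} {g : V' → V × V}

lemma case_distinct (hnetR : IsPhyloNet' R) (hnet' : IsPhyloNet' R')
    {a b c : V'} (hla : IsLf R' a) (hlb : IsLf R' b) (hlc : IsLf R' c)
    (hab : a ≠ b) (hac : a ≠ c) (hbc : b ≠ c)
    {x y z : V}
    (hxa : Relation.ReflTransGen R ((g a).2) x)
    (hyb : Relation.ReflTransGen R ((g b).2) y)
    (hzc : Relation.ReflTransGen R ((g c).2) z)
    (hdisj : ∀ d e : V', IsLf R' d → IsLf R' e → d ≠ e → ∀ w,
      Relation.ReflTransGen R (g d).2 w → Relation.ReflTransGen R (g e).2 w → False)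
    (hct : ConsistentTrip R' a b c) :
    ConsistentTrip (ExpandArc R' R g) (Sum.inr x) (Sum.inr y) (Sum.inr z) := by
  obtain ⟨u', v', q1, q2, q3, q4, huv, hq1, hq2, hq3, hq4, h12, h13, h14, h23, h24, h34⟩ := hct
  have hua : u' ≠ a := by
    intro he
    exact hab (he.symm.trans (leaf_not_start (he.symm ▸ hla) hq2).symm)
  have hub : u' ≠ b := by
    intro he
    exact hab ((leaf_not_start (he.symm ▸ hlb) hq1).trans he)
  have hvc : v' ≠ c := by
    intro he
    exact huv (leaf_not_start (he.symm ▸ hlc) hq3)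
  have hnlu : ¬ IsLf R' u' := by
    obtain ⟨m, hm, -⟩ := hq1.tail_path hua
    exact not_leaf_of_arc hm
  obtain ⟨r1, hr1⟩ := reach_to_path hxa
  obtain ⟨r2, hr2⟩ := reach_to_path hyb
  obtain ⟨r4, hr4⟩ := reach_to_path hzc
  refine ⟨Sum.inl u', Sum.inl v', _, _, q3.map Sum.inl, _, by simpa using huv,
    pth_expand hq1 hla hua hr1, pth_expand hq2 hlb hub hr2,
    pth_inl hq3 hnlu, pth_expand hq4 hlc hvc hr4, ?_, ?_, ?_, ?_, ?_, ?_⟩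
  · exact intdisj_glue_glue (hq1.dropLast_ne_nil hua) hr1.1 (hq2.dropLast_ne_nil hub) hr2.1
      h12.1 h12.2 (fun w hw hw2 => hdisj a b hla hlb hab w (hr1.reach hw) (hr2.reach hw2))
  · exact intdisj_glue_inl (hq1.dropLast_ne_nil hua) hr1.1 h13.1 h13.2
  · exact intdisj_glue_glue (hq1.dropLast_ne_nil hua) hr1.1 (hq4.dropLast_ne_nil hvc) hr4.1
      h14.1 h14.2 (fun w hw hw2 => hdisj a c hla hlc hac w (hr1.reach hw) (hr4.reach hw2))
  · exact (intdisj_glue_inl (hq2.dropLast_ne_nil hub) hr2.1 h23.1 h23.2)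
  · exact intdisj_glue_glue (hq2.dropLast_ne_nil hub) hr2.1 (hq4.dropLast_ne_nil hvc) hr4.1
      h24.1 h24.2 (fun w hw hw2 => hdisj b c hlb hlc hbc w (hr2.reach hw) (hr4.reach hw2))
  · exact (intdisj_glue_inl (hq4.dropLast_ne_nil hvc) hr4.1 h34.2 h34.1).symm

end Phylo

namespace Phylo
set_option linter.unusedSectionVars false
variable {α : Type*} {S : α → α → Prop} {p : List α} {a b : α}

lemma IsPth.tail_ne_nil (h : IsPth S p a b) (hab : a ≠ b) : p.tail ≠ [] := by
  have h2 := h.two_le_length hab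
  intro hc
  have : p.tail.length = p.length - 1 := by simp
  rw [hc] at this
  simp at this
  omega

lemma IsPth.head_not_mem_tail (hacyc : ∀ v, ¬ Relation.TransGen S v v)
    (h : IsPth S p a b) : a ∉ p.tail := by
  obtain ⟨t, rfl⟩ := h.exists_cons
  exact (List.nodup_cons.mp (h.nodup hacyc)).1

end Phylo

namespace Phylo
set_option linter.unusedSectionVars false
variable {V V' : Type*} [Fintype V] [Fintype V'] {R : V → V → Prop}
  {R' : V' → V' → Prop} {g : V' → V × V}

lemma case_same (hnetR : IsPhyloNet' R) {a : V'} (hla : IsLf R' a)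
    (hca : CutArc R (g a).1 (g a).2)
    {x y z : V} (hlx : IsLf R x) (hlz : IsLf R z)
    (hxa : Relation.ReflTransGen R ((g a).2) x)
    (hya : Relation.ReflTransGen R ((g a).2) y)
    (hza : Relation.ReflTransGen R ((g a).2) z)
    (hxy : x ≠ y) (hxz : x ≠ z)
    (hct : ConsistentTrip R x y z) :
    ConsistentTrip (ExpandArc R' R g) (Sum.inr x) (Sum.inr y) (Sum.inr z) := by
  obtain ⟨u, v, p1, p2, p3, p4, huv, hp1, hp2, hp3, hp4, h12, h13, h14, h23, h24, h34⟩ := hct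
  have hvax : (g a).2 ≠ x := fun he => hxy (hlx.reach_eq (he ▸ hya)).symm
  have hvaz : (g a).2 ≠ z := fun he => hxz (hlz.reach_eq (he ▸ hxa))
  have hu_in : Relation.ReflTransGen R ((g a).2) u := by
    by_contra hout
    exact cross_two_paths hnetR hca hp1 hp2 hxa hya hout hout hvax h12
  have hv_in : Relation.ReflTransGen R ((g a).2) v := by
    by_contra hout
    exact cross_two_paths hnetR hca hp4 hp3 hza hu_in hout hout hvaz h34.symm
  exact ⟨Sum.inr u, Sum.inr v, p1.map Sum.inr, p2.map Sum.inr, p3.map Sum.inr,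
    p4.map Sum.inr, by simpa using huv,
    pth_inr hla hp1 hu_in, pth_inr hla hp2 hu_in, pth_inr hla hp3 hv_in,
    pth_inr hla hp4 hv_in,
    intdisj_map Sum.inr_injective h12, intdisj_map Sum.inr_injective h13,
    intdisj_map Sum.inr_injective h14, intdisj_map Sum.inr_injective h23,
    intdisj_map Sum.inr_injective h24, intdisj_map Sum.inr_injective h34⟩

end Phylo

namespace Phylo
set_option linter.unusedSectionVars false
variable {V V' : Type*} [Fintype V] [Fintype V'] {R : V → V → Prop}
  {R' : V' → V' → Prop} {g : V' → V × V}

lemma case_xxz_same (hnetR : IsPhyloNet' R) {a : V'} (hla : IsLf R' a)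
    (hca : CutArc R (g a).1 (g a).2)
    {x z : V} (hlx : IsLf R x) (hlz : IsLf R z)
    (hxa : Relation.ReflTransGen R ((g a).2) x)
    (hza : Relation.ReflTransGen R ((g a).2) z) (hxz : x ≠ z)
    (hct : ConsistentTrip R x x z) :
    ConsistentTrip (ExpandArc R' R g) (Sum.inr x) (Sum.inr x) (Sum.inr z) := by
  have hacyc := hnetR.1
  obtain ⟨u, v, p1, p2, p3, p4, huv, hp1, hp2, hp3, hp4, h12, h13, h14, h23, h24, h34⟩ := hct
  have hvax : (g a).2 ≠ x := fun he => hxz (hlx.reach_eq (he ▸ hza)).symm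
  have hvaz : (g a).2 ≠ z := fun he => hxz (hlz.reach_eq (he ▸ hxa))
  have hu_in : Relation.ReflTransGen R ((g a).2) u := by
    by_contra hout
    exact cross_two_paths hnetR hca hp1 hp2 hxa hxa hout hout hvax h12
  have hv_in : Relation.ReflTransGen R ((g a).2) v := by
    by_contra hout
    exact cross_two_paths hnetR hca hp4 hp3 hza hu_in hout hout hvaz h34.symm
  have hvx : v ≠ x := by
    intro he
    have h1 : u = v := leaf_not_start (he.symm ▸ hlx) hp3
    exact huv h1
  by_cases hux : u = x
  · subst hux
    refine ⟨Sum.inr u, Sum.inr v, [Sum.inr u], [Sum.inr u], p3.map Sum.inr,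
      p4.map Sum.inr, by simpa using fun h => hvx h.symm,
      isPth_singleton _, isPth_singleton _, pth_inr hla hp3 hv_in, pth_inr hla hp4 hv_in,
      ⟨by simp, by simp⟩, ?_, ?_, ?_, ?_, intdisj_map Sum.inr_injective h34⟩
    · refine intdisj_singleton ?_
      rw [interior_map]
      rintro w hw
      obtain ⟨w0, hw0, rfl⟩ := List.mem_map.mp hw
      simp only [ne_eq, Sum.inr.injEq]
      exact (hp3.int_ne hacyc hw0).2.2
    · refine intdisj_singleton ?_
      rw [interior_map]
      rintro w hw
      obtain ⟨w0, hw0, rfl⟩ := List.mem_map.mp hw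
      simp only [ne_eq, Sum.inr.injEq]
      intro he
      exact h34.2 w0 (he ▸ hw0 : w0 ∈ interior p4) (he ▸ hp3.last_mem)
    · refine intdisj_singleton ?_
      rw [interior_map]
      rintro w hw
      obtain ⟨w0, hw0, rfl⟩ := List.mem_map.mp hw
      simp only [ne_eq, Sum.inr.injEq]
      intro he
      exact (hp3.int_ne hacyc (by rwa [he] at hw0 : u ∈ interior p3)).2.2 rfl
    · refine intdisj_singleton ?_
      rw [interior_map]
      rintro w hw
      obtain ⟨w0, hw0, rfl⟩ := List.mem_map.mp hw
      simp only [ne_eq, Sum.inr.injEq]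
      intro he
      exact h34.2 w0 hw0 ((he ▸ hp3.last_mem) : w0 ∈ p3)
  · obtain ⟨m, hum, hptail⟩ := hp1.tail_path hux
    have hP3 : IsPth R (p3 ++ p1.tail) v x := hp3.append hptail hum
    have hp3ne : p3 ≠ [] := hp3.1
    have ht1ne : p1.tail ≠ [] := hp1.tail_ne_nil hux
    have hxnp3 : x ∉ p3 := by
      intro hmem
      rcases hp3.mem_decomp hmem with he | he | hint
      · exact hvx he.symm
      · exact hux he.symm
      · exact h13.2 x hint hp1.last_mem
    have hunp4 : u ∉ p4 := by
      intro hmem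
      rcases hp4.mem_decomp hmem with he | he | hint
      · exact huv he
      · exact (not_leaf_of_arc hum) (he ▸ hlz)
      · exact h34.2 u hint hp3.last_mem
    have hxnp4 : x ∉ p4 := by
      intro hmem
      rcases hp4.mem_decomp hmem with he | he | hint
      · exact hvx he.symm
      · exact hxz he
      · exact h14.2 x hint hp1.last_mem
    have claimA : ∀ w ∈ interior (p3 ++ p1.tail), w ∉ p4 ∧ w ≠ x := by
      intro w hw
      rw [interior_append hp3ne ht1ne] at hw
      rcases List.mem_append.mp hw with hw | hw
      · have hwp3 : w ∈ p3 := List.mem_of_mem_tail hw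
        have hwnv : w ≠ v := by
          intro he
          exact hp3.head_not_mem_tail hacyc (he ▸ hw)
        rcases hp3.mem_decomp hwp3 with he | he | hint
        · exact absurd he hwnv
        · exact he ▸ ⟨hunp4, hux⟩
        · exact ⟨h34.1 w hint, fun he => hxnp3 (he ▸ hwp3)⟩
      · have hint : w ∈ interior p1 := by
          rw [interior]
          exact hw
        exact ⟨h14.1 w hint, (hp1.int_ne hacyc hint).2.2⟩
    refine ⟨Sum.inr x, Sum.inr v, [Sum.inr x], [Sum.inr x],
      (p3 ++ p1.tail).map Sum.inr, p4.map Sum.inr,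
      by simpa using fun h => hvx h.symm,
      isPth_singleton _, isPth_singleton _, pth_inr hla hP3 hv_in, pth_inr hla hp4 hv_in,
      ⟨by simp, by simp⟩, ?_, ?_, ?_, ?_, ?_⟩
    · refine intdisj_singleton ?_
      rw [interior_map]
      rintro w hw
      obtain ⟨w0, hw0, rfl⟩ := List.mem_map.mp hw
      simp only [ne_eq, Sum.inr.injEq]
      exact (claimA w0 hw0).2
    · refine intdisj_singleton ?_
      rw [interior_map]
      rintro w hw
      obtain ⟨w0, hw0, rfl⟩ := List.mem_map.mp hw
      simp only [ne_eq, Sum.inr.injEq]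
      intro he
      exact hxnp4 (he ▸ (interior_subset hw0))
    · refine intdisj_singleton ?_
      rw [interior_map]
      rintro w hw
      obtain ⟨w0, hw0, rfl⟩ := List.mem_map.mp hw
      simp only [ne_eq, Sum.inr.injEq]
      exact (claimA w0 hw0).2
    · refine intdisj_singleton ?_
      rw [interior_map]
      rintro w hw
      obtain ⟨w0, hw0, rfl⟩ := List.mem_map.mp hw
      simp only [ne_eq, Sum.inr.injEq]
      intro he
      exact hxnp4 (he ▸ (interior_subset hw0))
    · refine intdisj_map Sum.inr_injective ⟨fun w hw => (claimA w hw).1, ?_⟩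
      intro w hw hmem
      rcases List.mem_append.mp hmem with hm | hm
      · exact h34.2 w hw hm
      · exact h14.2 w hw (List.mem_of_mem_tail hm)

end Phylo

namespace Phylo
set_option linter.unusedSectionVars false
variable {V V' : Type*} [Fintype V] [Fintype V'] {R : V → V → Prop}
  {R' : V' → V' → Prop} {g : V' → V × V}

lemma case_xxz_diff (hnetR : IsPhyloNet' R) (hnet' : IsPhyloNet' R')
    {a c : V'} (hla : IsLf R' a) (hlc : IsLf R' c) (hac : a ≠ c)
    {x z : V}
    (hxa : Relation.ReflTransGen R ((g a).2) x)
    (hzc : Relation.ReflTransGen R ((g c).2) z)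
    (hdisj : ∀ w, Relation.ReflTransGen R ((g a).2) w →
      Relation.ReflTransGen R ((g c).2) w → False) :
    ConsistentTrip (ExpandArc R' R g) (Sum.inr x) (Sum.inr x) (Sum.inr z) := by
  have hacyc := hnetR.1
  obtain ⟨v', π1, π2, hπ1, hπ2, hd⟩ := branch hnet' hac
  have hva : v' ≠ a := by
    intro he
    exact hac ((leaf_not_start (he.symm ▸ hla) hπ2).trans he).symm
  have hvc : v' ≠ c := by
    intro he
    exact hac ((leaf_not_start (he.symm ▸ hlc) hπ1).trans he)
  obtain ⟨r, hr⟩ := reach_to_path hxa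
  obtain ⟨r4, hr4⟩ := reach_to_path hzc
  have hxnr : x ∉ r.dropLast := by
    have := getLast_not_mem_dropLast (hr.nodup hacyc) hr.1
    rwa [hr.getLast_eq] at this
  refine ⟨Sum.inr x, Sum.inl v', [Sum.inr x], [Sum.inr x],
    π1.dropLast.map Sum.inl ++ r.map Sum.inr,
    π2.dropLast.map Sum.inl ++ r4.map Sum.inr, by simp,
    isPth_singleton _, isPth_singleton _,
    pth_expand hπ1 hla hva hr, pth_expand hπ2 hlc hvc hr4,
    ⟨by simp, by simp⟩, ?_, ?_, ?_, ?_, ?_⟩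
  · refine (intdisj_singleton ?_)
    rw [interior_expand_eq (hπ1.dropLast_ne_nil hva) hr.1]
    intro w hw
    rcases List.mem_append.mp hw with hw | hw
    · obtain ⟨w0, -, rfl⟩ := List.mem_map.mp hw
      simp
    · obtain ⟨w0, hw0, rfl⟩ := List.mem_map.mp hw
      simp only [ne_eq, Sum.inr.injEq]
      exact fun he => hxnr (he ▸ hw0)
  · refine (intdisj_singleton ?_)
    rw [interior_expand_eq (hπ2.dropLast_ne_nil hvc) hr4.1]
    intro w hw
    rcases List.mem_append.mp hw with hw | hw
    · obtain ⟨w0, -, rfl⟩ := List.mem_map.mp hw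
      simp
    · obtain ⟨w0, hw0, rfl⟩ := List.mem_map.mp hw
      simp only [ne_eq, Sum.inr.injEq]
      intro he
      exact hdisj x hxa (he ▸ (hr4.reach ((List.dropLast_sublist r4).subset hw0)))
  · refine (intdisj_singleton ?_)
    rw [interior_expand_eq (hπ1.dropLast_ne_nil hva) hr.1]
    intro w hw
    rcases List.mem_append.mp hw with hw | hw
    · obtain ⟨w0, -, rfl⟩ := List.mem_map.mp hw
      simp
    · obtain ⟨w0, hw0, rfl⟩ := List.mem_map.mp hw
      simp only [ne_eq, Sum.inr.injEq]
      exact fun he => hxnr (he ▸ hw0)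
  · refine (intdisj_singleton ?_)
    rw [interior_expand_eq (hπ2.dropLast_ne_nil hvc) hr4.1]
    intro w hw
    rcases List.mem_append.mp hw with hw | hw
    · obtain ⟨w0, -, rfl⟩ := List.mem_map.mp hw
      simp
    · obtain ⟨w0, hw0, rfl⟩ := List.mem_map.mp hw
      simp only [ne_eq, Sum.inr.injEq]
      intro he
      exact hdisj x hxa (he ▸ (hr4.reach ((List.dropLast_sublist r4).subset hw0)))
  · exact intdisj_glue_glue (hπ1.dropLast_ne_nil hva) hr.1 (hπ2.dropLast_ne_nil hvc) hr4.1
      hd.1 hd.2 (fun w hw hw2 => hdisj w (hr.reach hw) (hr4.reach hw2))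

end Phylo

namespace Phylo
set_option linter.unusedSectionVars false
variable {V V' : Type*} [Fintype V] [Fintype V'] {R : V → V → Prop}
  {R' : V' → V' → Prop} {g : V' → V × V}

lemma case_pair (hnetR : IsPhyloNet' R) (hnet' : IsPhyloNet' R')
    {a c : V'} (hla : IsLf R' a) (hlc : IsLf R' c) (hac : a ≠ c)
    (hca : CutArc R (g a).1 (g a).2)
    {x y z : V} (hlx : IsLf R x)
    (hxa : Relation.ReflTransGen R ((g a).2) x)
    (hya : Relation.ReflTransGen R ((g a).2) y)
    (hzc : Relation.ReflTransGen R ((g c).2) z)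
    (hxy : x ≠ y)
    (hdisj : ∀ w, Relation.ReflTransGen R ((g a).2) w →
      Relation.ReflTransGen R ((g c).2) w → False)
    (hct : ConsistentTrip R x y z) :
    ConsistentTrip (ExpandArc R' R g) (Sum.inr x) (Sum.inr y) (Sum.inr z) := by
  have hacyc := hnetR.1
  obtain ⟨u, v, p1, p2, p3, p4, huv, hp1, hp2, hp3, hp4, h12, h13, h14, h23, h24, h34⟩ := hct
  have hvax : (g a).2 ≠ x := fun he => hxy (hlx.reach_eq (he ▸ hya)).symm
  have hu_in : Relation.ReflTransGen R ((g a).2) u := by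
    by_contra hout
    exact cross_two_paths hnetR hca hp1 hp2 hxa hya hout hout hvax h12
  have hv_out : ¬ Relation.ReflTransGen R ((g a).2) v := by
    intro hin
    exact hdisj z (hin.trans (hp4.reach hp4.last_mem)) hzc
  have hva_p3 : (g a).2 ∈ p3 := hca.cross_path hnetR hp3 hu_in hv_out
  obtain ⟨q, hq, hqsub, -, -⟩ := hp3.suffix hva_p3
  obtain ⟨v', π1, π2, hπ1, hπ2, hd⟩ := branch hnet' hac
  have hva' : v' ≠ a := by
    intro he
    exact hac ((leaf_not_start (he.symm ▸ hla) hπ2).trans he).symm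
  have hvc' : v' ≠ c := by
    intro he
    exact hac ((leaf_not_start (he.symm ▸ hlc) hπ1).trans he)
  obtain ⟨r4, hr4⟩ := reach_to_path hzc
  have hunq : u ∉ q.dropLast := by
    have := getLast_not_mem_dropLast (hq.nodup hacyc) hq.1
    rwa [hq.getLast_eq] at this
  have F1 : ∀ w ∈ q.dropLast, w ∉ p1 ∧ w ∉ p2 := by
    intro w hw
    have hwq : w ∈ q := (List.dropLast_sublist q).subset hw
    have hwp3 : w ∈ p3 := hqsub w hwq
    have hwnu : w ≠ u := fun he => hunq (he ▸ hw)
    rcases hp3.mem_decomp hwp3 with he | he | hint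
    · exact absurd (he ▸ hq.reach hwq) hv_out
    · exact absurd he hwnu
    · exact ⟨h13.2 w hint, h23.2 w hint⟩
  refine ⟨Sum.inr u, Sum.inl v', p1.map Sum.inr, p2.map Sum.inr,
    π1.dropLast.map Sum.inl ++ q.map Sum.inr,
    π2.dropLast.map Sum.inl ++ r4.map Sum.inr, by simp,
    pth_inr hla hp1 hu_in, pth_inr hla hp2 hu_in,
    pth_expand hπ1 hla hva' hq, pth_expand hπ2 hlc hvc' hr4,
    intdisj_map Sum.inr_injective h12, ?_, ?_, ?_, ?_, ?_⟩
  · exact (intdisj_glue_inr (hπ1.dropLast_ne_nil hva') hq.1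
      (fun w hw => (F1 w hw).1)
      (fun w hw hq' => h13.1 w hw (hqsub _ hq'))).symm
  · exact (intdisj_glue_inr (hπ2.dropLast_ne_nil hvc') hr4.1
      (fun w hw hp => hdisj w (hu_in.trans (hp1.reach hp))
        (hr4.reach ((List.dropLast_sublist r4).subset hw)))
      (fun w hw hp => hdisj w (hu_in.trans (hp1.reach (interior_subset hw)))
        (hr4.reach hp))).symm
  · exact (intdisj_glue_inr (hπ1.dropLast_ne_nil hva') hq.1
      (fun w hw => (F1 w hw).2)
      (fun w hw hq' => h23.1 w hw (hqsub _ hq'))).symm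
  · exact (intdisj_glue_inr (hπ2.dropLast_ne_nil hvc') hr4.1
      (fun w hw hp => hdisj w (hu_in.trans (hp2.reach hp))
        (hr4.reach ((List.dropLast_sublist r4).subset hw)))
      (fun w hw hp => hdisj w (hu_in.trans (hp2.reach (interior_subset hw)))
        (hr4.reach hp))).symm
  · exact intdisj_glue_glue (hπ1.dropLast_ne_nil hva') hq.1
      (hπ2.dropLast_ne_nil hvc') hr4.1 hd.1 hd.2
      (fun w hw hw2 => hdisj w (hq.reach hw) (hr4.reach hw2))

end Phylo

open Phylo in
/-- Let `R` be a level-2 network consistent with the dense triplet set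
`T`, and let `T' = CutInduce(N,T)` be the induced triplet set on the collapsed leaves
(which correspond bijectively, via `g`, to the highest cut-arcs of `R`). If `R'` is
any network consistent with `T'`, then the expansion of `R'` (replacing each
collapsed leaf by the subnetwork of `R` below the corresponding highest cut-arc) is
consistent with `T`. -/
theorem stmt12 {V V' : Type*} [Fintype V] [Fintype V']
    (R : V → V → Prop) (T : Set (V × V × V)) (R' : V' → V' → Prop) (g : V' → V × V)
    (hgood : GoodNet R) (hlev : LevelK 2 R) (hdense : DenseT T)
    (hcons : ConsistentSet R T) (hL : netLeaves R = tripLeaves T)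
    (hnet' : IsPhyloNet R')
    (hg1 : ∀ b, IsLf R' b → HighestCutArc R (g b).1 (g b).2)
    (hg2 : ∀ b b', IsLf R' b → IsLf R' b' → g b = g b' → b = b')
    (hg3 : ∀ u v, HighestCutArc R u v → ∃ b, IsLf R' b ∧ g b = (u, v))
    (hcons' : ∀ a b c : V', IsLf R' a → IsLf R' b → IsLf R' c →
      a ≠ b → a ≠ c → b ≠ c →
      (∃ x ∈ leavesBelow R (g a).1 (g a).2, ∃ y ∈ leavesBelow R (g b).1 (g b).2,
        ∃ z ∈ leavesBelow R (g c).1 (g c).2, (x, y, z) ∈ T) →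
      ConsistentTrip R' a b c) :
    ∀ x y z : V, (x, y, z) ∈ T →
      ConsistentTrip (ExpandArc R' R g) (Sum.inr x) (Sum.inr y) (Sum.inr z) := by
  intro x y z hxyz
  have hnetR : IsPhyloNet' R := hgood.1
  have hnetR' : IsPhyloNet' R' := hnet'
  have hacyc := hnetR.1
  have hxL : IsLf R x := by
    have : x ∈ netLeaves R := by rw [hL]; exact ⟨(x,y,z), hxyz, Or.inl rfl⟩
    exact this
  have hyL : IsLf R y := by
    have : y ∈ netLeaves R := by rw [hL]; exact ⟨(x,y,z), hxyz, Or.inr (Or.inl rfl)⟩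
    exact this
  have hzL : IsLf R z := by
    have : z ∈ netLeaves R := by rw [hL]; exact ⟨(x,y,z), hxyz, Or.inr (Or.inr rfl)⟩
    exact this
  obtain ⟨ua, va, hha, hxa'⟩ := leaf_below_highest hnetR hxL
  obtain ⟨a, hla, hga⟩ := hg3 ua va hha
  have hxa : Relation.ReflTransGen R ((g a).2) x := by rw [hga]; exact hxa'
  obtain ⟨ub, vb, hhb, hyb'⟩ := leaf_below_highest hnetR hyL
  obtain ⟨b, hlb, hgb⟩ := hg3 ub vb hhb
  have hyb : Relation.ReflTransGen R ((g b).2) y := by rw [hgb]; exact hyb'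
  obtain ⟨uc, vc, hhc, hzc'⟩ := leaf_below_highest hnetR hzL
  obtain ⟨c, hlc, hgc⟩ := hg3 uc vc hhc
  have hzc : Relation.ReflTransGen R ((g c).2) z := by rw [hgc]; exact hzc'
  have hdisjL : ∀ d e : V', IsLf R' d → IsLf R' e → d ≠ e → ∀ w,
      Relation.ReflTransGen R (g d).2 w → Relation.ReflTransGen R (g e).2 w → False := by
    intro d e hld hle hde w h1 h2
    refine highest_disjoint hnetR (hg1 d hld) (hg1 e hle) ?_ h1 h2
    intro hpq
    apply hde
    apply hg2 d e hld hle
    rw [Prod.mk.eta, Prod.mk.eta] at hpq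
    exact hpq
  by_cases hxy : x = y
  · subst hxy
    by_cases hxz : x = z
    · subst hxz
      exact case_xxx hnetR hnetR' hla hxa
    · by_cases hacq : a = c
      · exact case_xxz_same hnetR hla (hg1 a hla).1 hxL hzL hxa
          (by rw [hacq]; exact hzc) hxz (hcons _ hxyz)
      · exact case_xxz_diff hnetR hnetR' hla hlc hacq hxa hzc
          (hdisjL a c hla hlc hacq)
  · by_cases hxz : x = z
    · exact (xyx_false hnetR hxL hxy (by
        have h := hcons _ hxyz; rw [← hxz] at h; exact h)).elim
    · by_cases hyz : y = z
      · exact (xyy_false hnetR hyL hxy (by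
          have h := hcons _ hxyz; rw [← hyz] at h; exact h)).elim
      · by_cases hab : a = b
        · by_cases hbc : b = c
          · exact case_same hnetR hla (hg1 a hla).1 hxL hzL hxa
              (by rw [hab]; exact hyb) (by rw [hab, hbc]; exact hzc) hxy hxz
              (hcons _ hxyz)
          · have hcnea : a ≠ c := by rw [hab]; exact hbc
            exact case_pair hnetR hnetR' hla hlc hcnea (hg1 a hla).1 hxL hxa
              (by rw [hab]; exact hyb) hzc hxy (hdisjL a c hla hlc hcnea)
              (hcons _ hxyz)
        · by_cases hacq : a = c
          · exfalso
            have hy_out : ¬ Relation.ReflTransGen R ((g a).2) y :=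
              fun h => hdisjL a b hla hlb hab y h hyb
            obtain ⟨u, v, p1, p2, p3, p4, huv, hp1, hp2, hp3, hp4,
              h12, h13, h14, h23, h24, h34⟩ := hcons _ hxyz
            have hu_out : ¬ Relation.ReflTransGen R ((g a).2) u :=
              fun h => hy_out (h.trans (hp2.reach hp2.last_mem))
            have hv_out : ¬ Relation.ReflTransGen R ((g a).2) v :=
              fun h => hu_out (h.trans (hp3.reach hp3.last_mem))
            have hza : Relation.ReflTransGen R ((g a).2) z := by rw [hacq]; exact hzc
            have hvax : (g a).2 ≠ x :=
              fun he => hxz ((hxL.reach_eq (he ▸ hza)).symm)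
            exact cross_two_paths hnetR (hg1 a hla).1 hp1 hp4 hxa hza hu_out hv_out
              hvax h14
          · by_cases hbc : b = c
            · exfalso
              have hx_out : ¬ Relation.ReflTransGen R ((g b).2) x :=
                fun h => hdisjL b a hlb hla (fun h2 => hab h2.symm) x h hxa
              obtain ⟨u, v, p1, p2, p3, p4, huv, hp1, hp2, hp3, hp4,
                h12, h13, h14, h23, h24, h34⟩ := hcons _ hxyz
              have hu_out : ¬ Relation.ReflTransGen R ((g b).2) u :=
                fun h => hx_out (h.trans (hp1.reach hp1.last_mem))
              have hv_out : ¬ Relation.ReflTransGen R ((g b).2) v :=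
                fun h => hu_out (h.trans (hp3.reach hp3.last_mem))
              have hzb : Relation.ReflTransGen R ((g b).2) z := by rw [hbc]; exact hzc
              have hvby : (g b).2 ≠ y :=
                fun he => hyz ((hyL.reach_eq (he ▸ hzb)).symm)
              exact cross_two_paths hnetR (hg1 b hlb).1 hp2 hp4 hyb hzb hu_out hv_out
                hvby h24
            · exact case_distinct hnetR hnetR' hla hlb hlc hab hacq hbc hxa hyb hzc
                hdisjL (hcons' a b c hla hlb hlc hab hacq hbc
                  ⟨x, ⟨hxL, hxa⟩, y, ⟨hyL, hyb⟩, z, ⟨hzL, hzc⟩, hxyz⟩)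
end

section
/- If three leaves x, y, z of a phylogenetic network N are each reachable from the root by a unique directed path (in particular, none is reachable from any recombination vertex), then exactly one of the triplets xy|z, xz|y, yz|x is consistent with N. -/
namespace PhyloAux
open Phylo

variable {V : Type*} {R : V → V → Prop}

/-! ### Basic path API -/

lemma isPth_head {p : List V} {a b : V} (h : IsPth R p a b) : a :: p.tail = p := by
  obtain ⟨hne, hh, -, -⟩ := h
  rw [List.head?_eq_head hne, Option.some_inj] at hh
  rw [← hh]; exact List.cons_head_tail hne

lemma isPth_getLast {p : List V} {a b : V} (h : IsPth R p a b) (hne : p ≠ []) :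
    p.getLast hne = b := by
  have h2 := h.2.2.1
  rw [List.getLast?_eq_getLast hne, Option.some_inj] at h2
  exact h2

lemma isPth_singleton (a : V) : IsPth R [a] a a := ⟨by simp, rfl, rfl, by constructor⟩

lemma isPth_append {p q : List V} {a b c : V} (hp : IsPth R p a b) (hq : IsPth R q b c) :
    IsPth R (p ++ q.tail) a c := by
  have hq' : b :: q.tail = q := isPth_head hq
  obtain ⟨hpne, hph, hpl, hpc⟩ := hp
  obtain ⟨hqne, hqh, hql, hqc⟩ := hq
  refine ⟨by simp [hpne], ?_, ?_, ?_⟩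
  · rw [List.head?_append, hph]; rfl
  · rcases eq_or_ne q.tail [] with ht | ht
    · have hqb : q = [b] := by rw [← hq', ht]
      rw [hqb] at hql; simp at hql
      simpa [ht, hql] using hpl
    · have h1 : q.getLast? = q.tail.getLast? := by
        conv_lhs => rw [← hq']
        rw [show (b :: q.tail) = [b] ++ q.tail from rfl,
          List.getLast?_append_of_ne_nil _ ht]
      rw [List.getLast?_append_of_ne_nil _ ht, ← h1, hql]
  · show List.IsChain R (p ++ q.tail); rw [List.isChain_append]
    refine ⟨hpc, hqc.tail, ?_⟩
    intro u hu v hv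
    rw [hpl, Option.mem_some_iff] at hu
    subst hu
    have hc2 : List.Chain' R (b :: q.tail) := by rw [hq']; exact hqc
    exact (List.isChain_cons.mp hc2).1 v hv

lemma exists_root_path [Fintype V] (hnet : IsPhyloNet R) {r : V} (hr : inDeg R r = 0) (v : V) :
    ∃ p, IsPth R p r v := by
  haveI : IsIrrefl V (Relation.TransGen R) := ⟨hnet.1⟩
  haveI : IsTrans V (Relation.TransGen R) := ⟨fun _ _ _ => Relation.TransGen.trans⟩
  have hwf : WellFounded (Relation.TransGen R) := Finite.wellFounded_of_trans_of_irrefl _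
  induction v using hwf.induction with
  | _ v ih =>
    rcases eq_or_ne (inDeg R v) 0 with h0 | h0
    · obtain ⟨r', -, hr'⟩ := hnet.2.1
      have hvr : v = r := (hr' v h0).trans (hr' r hr).symm
      exact ⟨[v], hvr ▸ isPth_singleton v⟩
    · have hne : {u | R u v}.Nonempty := by
        rw [Set.nonempty_iff_ne_empty]
        intro he
        exact h0 (by simp [inDeg, he])
      obtain ⟨u, hu⟩ := hne
      obtain ⟨p, hp⟩ := ih u (Relation.TransGen.single hu)
      refine ⟨p ++ [v], ?_⟩
      have h2 : IsPth R [u, v] u v := ⟨by simp, rfl, rfl, List.isChain_pair.mpr hu⟩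
      exact isPth_append hp h2

lemma transGen_of_chain'_mem : ∀ {l : List V} {a b : V},
    List.Chain' R (a :: l) → b ∈ l → Relation.TransGen R a b := by
  intro l
  induction l with
  | nil => intro a b _ hb; simp at hb
  | cons c l' ih =>
    intro a b hc hb
    have hac : R a c := (List.isChain_cons_cons.mp hc).1
    have hcl : List.Chain' R (c :: l') := (List.isChain_cons_cons.mp hc).2
    rcases List.mem_cons.mp hb with rfl | hb
    · exact Relation.TransGen.single hac
    · exact (Relation.TransGen.single hac).trans (ih hcl hb)

lemma nodup_of_chain' (hacy : ∀ v, ¬ Relation.TransGen R v v) :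
    ∀ {l : List V}, List.Chain' R l → l.Nodup := by
  intro l
  induction l with
  | nil => simp
  | cons a t ih =>
    intro hc
    rw [List.nodup_cons]
    exact ⟨fun ha => hacy a (transGen_of_chain'_mem hc ha), ih hc.tail⟩

lemma isPth_drop {p : List V} {a b : V} (hp : IsPth R p a b) {n : ℕ} (hn : n < p.length) :
    IsPth R (p.drop n) (p[n]'hn) b := by
  obtain ⟨hne, hh, hl, hc⟩ := hp
  have hdne : p.drop n ≠ [] := by
    rw [← List.length_pos_iff, List.length_drop]; omega
  refine ⟨hdne, ?_, ?_, hc.suffix (List.drop_suffix n p)⟩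
  · rw [List.head?_drop]
    exact List.getElem?_eq_getElem hn
  · have h2 : (p.take n ++ p.drop n).getLast? = (p.drop n).getLast? :=
      List.getLast?_append_of_ne_nil _ hdne
    rw [List.take_append_drop] at h2
    rw [← h2, hl]

lemma isPth_take {p : List V} {a b : V} (hp : IsPth R p a b) {n : ℕ} (hn : n < p.length) :
    IsPth R (p.take (n + 1)) a (p[n]'hn) := by
  obtain ⟨hne, hh, hl, hc⟩ := hp
  have hlen : (p.take (n + 1)).length = n + 1 := by simp; omega
  refine ⟨by intro h; rw [h] at hlen; simp at hlen, ?_, ?_, hc.prefix (List.take_prefix _ p)⟩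
  · rw [List.head?_eq_getElem?] at hh ⊢
    rw [List.getElem?_take]
    simpa using hh
  · have h2 := List.take_concat_get hn
    rw [← h2, List.concat_eq_append, List.getLast?_concat]

lemma getElem_middle (s t : List V) (w : V) :
    (s ++ w :: t)[s.length]'(by simp) = w := by
  induction s with
  | nil => rfl
  | cons a s ih => simpa using ih

/-! ### Interior lemmas -/

lemma interior_subset_dropLast {l : List V} : Phylo.interior l ⊆ l.dropLast := by
  match l with
  | [] => intro w hw; simp [Phylo.interior] at hw
  | [a] => intro w hw; simp [Phylo.interior] at hw
  | a :: b :: t =>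
    intro w hw
    unfold Phylo.interior at hw
    rw [show (a :: b :: t).dropLast = a :: (b :: t).dropLast from rfl]
    exact List.mem_cons_of_mem _ (by simpa using hw)

lemma interior_subset_tail {l : List V} : Phylo.interior l ⊆ l.tail := by
  intro w hw
  unfold Phylo.interior at hw
  exact (List.dropLast_sublist _).subset hw

lemma interior_ne_getLast {p : List V} {a b w : V} (hp : IsPth R p a b)
    (hw : w ∈ Phylo.interior p) (hnd : p.Nodup) : w ≠ b := by
  intro he
  have h1 : w ∈ p.dropLast := interior_subset_dropLast hw
  have h2 := List.dropLast_append_getLast hp.1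
  have hnd2 : (p.dropLast ++ [p.getLast hp.1]).Nodup := by rw [h2]; exact hnd
  rw [List.nodup_append] at hnd2
  exact hnd2.2.2 w h1 (p.getLast hp.1) (by simp) (by rw [he, isPth_getLast hp hp.1])

lemma mem_dropLast_of_ne {l : List V} (hne : l ≠ []) {w : V} (hw : w ∈ l)
    (hne2 : w ≠ l.getLast hne) : w ∈ l.dropLast := by
  have h2 := List.dropLast_append_getLast hne
  rw [← h2] at hw
  rcases List.mem_append.mp hw with h | h
  · exact h
  · simp at h; exact absurd h hne2

lemma interior_drop_subset {l : List V} {n : ℕ} :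
    Phylo.interior (l.drop n) ⊆ l.drop (n + 1) := by
  intro w hw
  unfold Phylo.interior at hw
  rw [List.tail_drop] at hw
  exact (List.dropLast_sublist _).subset hw

/-! ### getElem membership helpers -/

lemma mem_drop_idx {l : List V} {n : ℕ} {w : V} (hw : w ∈ l.drop n) :
    ∃ i, n ≤ i ∧ ∃ h : i < l.length, l[i] = w := by
  rw [List.mem_iff_getElem] at hw
  obtain ⟨k, hk, he⟩ := hw
  have hk2 : n + k < l.length := by
    rw [List.length_drop] at hk; omega
  refine ⟨n + k, by omega, hk2, ?_⟩
  rw [← he]; exact (List.getElem_drop (xs := l)).symm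

lemma mem_take_idx {l : List V} {n : ℕ} {w : V} (hw : w ∈ l.take n) :
    ∃ i, i < n ∧ ∃ h : i < l.length, l[i] = w := by
  rw [List.mem_take_iff_getElem] at hw
  obtain ⟨i, hi, he⟩ := hw
  exact ⟨i, lt_of_lt_of_le hi inf_le_left, lt_of_lt_of_le hi inf_le_right, he⟩

lemma drop_mem_of_idx {l : List V} {n i : ℕ} (hni : n ≤ i) (h : i < l.length) :
    l[i] ∈ l.drop n := by
  obtain ⟨k, rfl⟩ : ∃ k, i = n + k := ⟨i - n, by omega⟩
  have hb : k < (l.drop n).length := by rw [List.length_drop]; omega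
  have he := List.getElem_drop (xs := l) (i := n) (j := k) (h := hb)
  rw [← he]; exact List.getElem_mem _

lemma take_mem_of_idx {l : List V} {n i : ℕ} (hni : i < n) (h : i < l.length) :
    l[i] ∈ l.take n := by
  have hb : i < (l.take n).length := by simp; omega
  have he := List.getElem_take (xs := l) (h := hb)
  rw [← he]; exact List.getElem_mem _


/-! ### Unique path machinery -/

section Unique
variable [Fintype V]

lemma path_to_mem_suffix (hnet : IsPhyloNet R) {r : V} (hr : inDeg R r = 0)
    {Px : List V} {x : V} (hPx : IsPth R Px r x)
    (hux : ∀ p q : List V, IsPth R p r x → IsPth R q r x → p = q)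
    {s t : List V} {a : V} (hdec : Px = s ++ a :: t)
    {q : List V} {c : V} (hq : IsPth R q c a) : q <:+ s ++ [a] := by
  obtain ⟨e, he⟩ := exists_root_path hnet hr c
  have h1 : IsPth R (e ++ q.tail) r a := isPth_append he hq
  have h2 : IsPth R (a :: t) a x := by
    refine ⟨by simp, rfl, ?_, (hdec ▸ hPx.2.2.2).suffix ⟨s, rfl⟩⟩
    have h3 := hPx.2.2.1
    rw [hdec, List.getLast?_append_of_ne_nil _ (by simp)] at h3
    exact h3
  have h3 : IsPth R ((e ++ q.tail) ++ t) r x := by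
    have h4 := isPth_append h1 h2
    simpa using h4
  have h4 : (e ++ q.tail) ++ t = (s ++ [a]) ++ t := by
    rw [hux _ _ h3 hPx, hdec]; simp
  have h5 : e ++ q.tail = s ++ [a] := List.append_cancel_right h4
  have h6 : e.dropLast ++ [c] = e := by
    have h7 := List.dropLast_append_getLast he.1
    rw [isPth_getLast he he.1] at h7
    exact h7
  have h7 : q = c :: q.tail := (isPth_head hq).symm
  refine ⟨e.dropLast, ?_⟩
  calc e.dropLast ++ q = e.dropLast ++ (c :: q.tail) := by rw [← h7]
    _ = (e.dropLast ++ [c]) ++ q.tail := by simp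
    _ = e ++ q.tail := by rw [h6]
    _ = s ++ [a] := h5

end Unique

/-! ### Maximal common prefix -/

open Classical in
noncomputable def mcp (p q : List V) : ℕ :=
  Nat.findGreatest (fun n => p.take n = q.take n) (min p.length q.length)

open Classical in
lemma mcp_take (p q : List V) : p.take (mcp p q) = q.take (mcp p q) :=
  Nat.findGreatest_spec (P := fun n => p.take n = q.take n) (Nat.zero_le _) rfl

open Classical in
lemma mcp_le (p q : List V) : mcp p q ≤ min p.length q.length :=
  Nat.findGreatest_le _

open Classical in
lemma le_mcp {p q : List V} {n : ℕ} (hn : n ≤ min p.length q.length)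
    (h : p.take n = q.take n) : n ≤ mcp p q :=
  Nat.le_findGreatest hn h

lemma mcp_comm (p q : List V) : mcp p q = mcp q p := by
  have h1 : ∀ a b : List V, mcp a b ≤ mcp b a := fun a b =>
    le_mcp (by rw [min_comm]; exact mcp_le a b) (mcp_take a b).symm
  exact le_antisymm (h1 p q) (h1 q p)

lemma take_eq_of_le {p q : List V} {n k : ℕ} (hk : k ≤ n) (h : p.take n = q.take n) :
    p.take k = q.take k := by
  have h2 := congrArg (List.take k) h
  rwa [List.take_take, List.take_take, min_eq_left hk] at h2

lemma mcp_le_trans {p q s : List V} (h : mcp p q ≤ mcp p s) : mcp p q ≤ mcp q s := by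
  apply le_mcp
  · refine le_min ?_ ?_
    · exact le_trans (mcp_le p q) (min_le_right _ _)
    · exact le_trans h (le_trans (mcp_le p s) (min_le_right _ _))
  · exact (mcp_take p q).symm.trans (take_eq_of_le h (mcp_take p s))

lemma mcp_getElem {p q : List V} {i : ℕ} (hi : i < mcp p q) :
    ∃ (h1 : i < p.length) (h2 : i < q.length), p[i] = q[i] := by
  have hle := mcp_le p q
  have h1 : i < p.length := lt_of_lt_of_le hi (le_trans hle (min_le_left _ _))
  have h2 : i < q.length := lt_of_lt_of_le hi (le_trans hle (min_le_right _ _))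
  refine ⟨h1, h2, ?_⟩
  have hb1 : i < (p.take (mcp p q)).length := by simp; omega
  have hb2 : i < (q.take (mcp p q)).length := by simp; omega
  have e1 : (p.take (mcp p q))[i]'hb1 = p[i]'h1 := List.getElem_take (xs := p)
  have e2 : (q.take (mcp p q))[i]'hb2 = q[i]'h2 := List.getElem_take (xs := q)
  rw [← e1, ← e2]
  congr 1
  exact mcp_take p q

lemma one_le_mcp {r x y : V} {p q : List V} (hp : IsPth R p r x) (hq : IsPth R q r y) :
    1 ≤ mcp p q := by
  apply le_mcp
  · refine le_min ?_ ?_ <;> rw [Nat.one_le_iff_ne_zero, ← Nat.pos_iff_ne_zero,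
      List.length_pos_iff] <;> [exact hp.1; exact hq.1]
  · rw [List.take_one, List.take_one, hp.2.1, hq.2.1]

section Unique2
variable [Fintype V]

lemma common_mem (hnet : IsPhyloNet R) {r : V} (hr : inDeg R r = 0)
    {Px Py : List V} {x y : V}
    (hPx : IsPth R Px r x) (hPy : IsPth R Py r y)
    (hux : ∀ p q : List V, IsPth R p r x → IsPth R q r x → p = q)
    (huy : ∀ p q : List V, IsPth R p r y → IsPth R q r y → p = q)
    {w : V} (hwx : w ∈ Px) (hwy : w ∈ Py) :
    ∃ j, j < mcp Px Py ∧ ∃ (h1 : j < Px.length) (h2 : j < Py.length),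
      Px[j] = w ∧ Py[j] = w := by
  obtain ⟨s, t, hst⟩ := List.append_of_mem hwx
  obtain ⟨s', t', hst'⟩ := List.append_of_mem hwy
  have hi : s.length < Px.length := by
    rw [hst, List.length_append, List.length_cons]; omega
  have hi' : s'.length < Py.length := by
    rw [hst', List.length_append, List.length_cons]; omega
  have hgx : Px[s.length]'hi = w := by subst hst; exact getElem_middle s t w
  have hgy : Py[s'.length]'hi' = w := by subst hst'; exact getElem_middle s' t' w
  have q1 : IsPth R (Px.take (s.length + 1)) r w := by
    have := isPth_take hPx hi
    rwa [hgx] at this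
  have q2 : IsPth R (Py.take (s'.length + 1)) r w := by
    have := isPth_take hPy hi'
    rwa [hgy] at this
  have htake1 : Px.take (s.length + 1) = s ++ [w] := by
    rw [hst, show s ++ w :: t = (s ++ [w]) ++ t by simp]
    exact List.take_left' (by simp)
  have htake2 : Py.take (s'.length + 1) = s' ++ [w] := by
    rw [hst', show s' ++ w :: t' = (s' ++ [w]) ++ t' by simp]
    exact List.take_left' (by simp)
  have hsfx1 : Py.take (s'.length + 1) <:+ s ++ [w] :=
    path_to_mem_suffix hnet hr hPx hux hst q2
  have hsfx2 : Px.take (s.length + 1) <:+ s' ++ [w] :=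
    path_to_mem_suffix hnet hr hPy huy hst' q1
  rw [← htake1] at hsfx1
  rw [← htake2] at hsfx2
  have hlen1 : (Px.take (s.length + 1)).length = s.length + 1 := by simp; omega
  have hlen2 : (Py.take (s'.length + 1)).length = s'.length + 1 := by simp; omega
  have hle1 : s'.length + 1 ≤ s.length + 1 := by
    have h9 := hsfx1.length_le; rw [hlen1, hlen2] at h9; exact h9
  have hle2 : s.length + 1 ≤ s'.length + 1 := by
    have h9 := hsfx2.length_le; rw [hlen1, hlen2] at h9; exact h9
  have hss : s.length = s'.length := by omega
  have heq : Px.take (s.length + 1) = Py.take (s'.length + 1) :=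
    hsfx2.eq_of_length (by rw [hlen1, hlen2]; omega)
  have hmcp : s.length + 1 ≤ mcp Px Py := by
    apply le_mcp
    · exact le_min (by omega) (by omega)
    · rw [heq, hss]
  have hss' : s = s' := by
    have h9 : s ++ [w] = s' ++ [w] := by rw [← htake1, ← htake2, heq]
    exact List.append_cancel_right h9
  subst hss'
  exact ⟨s.length, by omega, hi, hi', hgx, hgy⟩

lemma leaf_not_mem {r x y : V} {Py : List V} (hx : IsLf R x) (hxy : x ≠ y)
    (hPy : IsPth R Py r y) : x ∉ Py := by
  intro hmem
  obtain ⟨s, t, hst⟩ := List.append_of_mem hmem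
  cases t with
  | nil =>
    apply hxy
    have h2 := hPy.2.2.1
    rw [hst, show s ++ [x] = s ++ [x] from rfl, List.getLast?_concat] at h2
    exact Option.some_inj.mp h2
  | cons d t' =>
    have hchain : List.Chain' R (x :: d :: t') :=
      hPy.2.2.2.suffix ⟨s, hst.symm⟩
    have hrel : R x d := (List.isChain_cons_cons.mp hchain).1
    have h0 : outDeg R x = 0 := hx
    rw [outDeg, Set.ncard_eq_zero (Set.toFinite _)] at h0
    have : d ∈ {w | R x w} := hrel
    rw [h0] at this
    exact this

lemma mcp_lt_left {r x y : V} {Px Py : List V} (hx : IsLf R x) (hxy : x ≠ y)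
    (hPx : IsPth R Px r x) (hPy : IsPth R Py r y) : mcp Px Py < Px.length := by
  by_contra h
  push_neg at h
  have hm := mcp_le Px Py
  have hlen : mcp Px Py = Px.length :=
    le_antisymm (le_trans hm (min_le_left _ _)) h
  have hPfx : Px = Py.take (mcp Px Py) := by
    conv_lhs => rw [← List.take_length (l := Px), ← hlen]
    exact mcp_take Px Py
  have hxP : x ∈ Px := by
    have := isPth_getLast hPx hPx.1
    rw [← this]
    exact List.getLast_mem _
  have hxPy : x ∈ Py := List.take_subset _ _ (hPfx ▸ hxP)
  exact leaf_not_mem hx hxy hPy hxPy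

end Unique2

/-! ### More helpers -/

lemma nodup_idx {l : List V} (hnd : l.Nodup) {i j : ℕ} (hi : i < l.length)
    (hj : j < l.length) (he : l[i] = l[j]) : i = j :=
  (List.Nodup.getElem_inj_iff hnd).mp he

lemma chain'_rel {l : List V} (hc : List.Chain' R l) {i : ℕ} (h : i + 1 < l.length) :
    R (l[i]'(by omega)) (l[i+1]'h) := by
  replace hc : List.IsChain R l := hc; rw [List.isChain_iff_getElem] at hc
  have h2 := hc i (by omega)
  simpa [List.get_eq_getElem] using h2

lemma suffix_eq_drop {l p : List V} {a c : V} (hp : IsPth R p a c) (hs : p <:+ l)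
    (hnd : l.Nodup) {j : ℕ} (hj : j < l.length) (hje : l[j] = a) : p = l.drop j := by
  obtain ⟨s0, hs0⟩ := hs
  have hp' : a :: p.tail = p := isPth_head hp
  have hdec : l = s0 ++ a :: p.tail := by
    rw [← hs0]; congr 1; exact hp'.symm
  subst hdec
  have hlen : s0.length < (s0 ++ a :: p.tail).length := by
    rw [List.length_append, List.length_cons]; omega
  have hget : (s0 ++ a :: p.tail)[s0.length]'hlen = a := getElem_middle _ _ _
  have hjs : j = s0.length := nodup_idx hnd hj hlen (hje.trans hget.symm)
  subst hjs
  rw [List.drop_left]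
  exact hp'.symm

lemma consistent_swap {x y z : V} (h : ConsistentTrip R x y z) : ConsistentTrip R y x z := by
  obtain ⟨u, v, p1, p2, p3, p4, h1, h2, h3, h4, h5, d12, d13, d14, d23, d24, d34⟩ := h
  exact ⟨u, v, p2, p1, p3, p4, h1, h3, h2, h4, h5, ⟨d12.2, d12.1⟩, d23, d24, d13, d14, d34⟩

/-! ### Main lemmas -/

section Main
variable [Fintype V] {r x y z : V} {Px Py Pz : List V}

lemma pos_case (hnet : IsPhyloNet R) (hr : inDeg R r = 0)
    (hPx : IsPth R Px r x) (hPy : IsPth R Py r y) (hPz : IsPth R Pz r z)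
    (hux : ∀ p q : List V, IsPth R p r x → IsPth R q r x → p = q)
    (huy : ∀ p q : List V, IsPth R p r y → IsPth R q r y → p = q)
    (huz : ∀ p q : List V, IsPth R p r z → IsPth R q r z → p = q)
    (hm : mcp Px Pz = mcp Py Pz) (hlt : mcp Px Pz < mcp Px Py) :
    ConsistentTrip R x y z := by
  have hm1 : 1 ≤ mcp Px Pz := one_le_mcp hPx hPz
  have hbx' : mcp Px Py ≤ Px.length := le_trans (mcp_le _ _) (min_le_left _ _)
  have hby' : mcp Px Py ≤ Py.length := le_trans (mcp_le _ _) (min_le_right _ _)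
  have hbz : mcp Px Pz ≤ Pz.length := le_trans (mcp_le _ _) (min_le_right _ _)
  have nodx : Px.Nodup := nodup_of_chain' hnet.1 hPx.2.2.2
  have nody : Py.Nodup := nodup_of_chain' hnet.1 hPy.2.2.2
  have nodz : Pz.Nodup := nodup_of_chain' hnet.1 hPz.2.2.2
  obtain ⟨n0, hn0⟩ : ∃ n0, mcp Px Pz = n0 + 1 := ⟨mcp Px Pz - 1, by omega⟩
  obtain ⟨n1, hn1⟩ : ∃ n1, mcp Px Py = n1 + 1 := ⟨mcp Px Py - 1, by omega⟩
  have hn01 : n0 < n1 := by omega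
  obtain ⟨hn1x, hn1y, hexy⟩ := mcp_getElem (p := Px) (q := Py) (i := n1) (by omega)
  obtain ⟨hn0x, hn0z, hexz⟩ := mcp_getElem (p := Px) (q := Pz) (i := n0) (by omega)
  have hp1 : IsPth R (Px.drop n1) (Px[n1]'hn1x) x := isPth_drop hPx hn1x
  have hp2 : IsPth R (Py.drop n1) (Px[n1]'hn1x) y := by
    have h9 := isPth_drop hPy hn1y
    rwa [← hexy] at h9
  have hpt : IsPth R (Px.take (n1+1)) r (Px[n1]'hn1x) := isPth_take hPx hn1x
  have hlent : (Px.take (n1+1)).length = n1 + 1 := by simp; omega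
  have hn0t : n0 < (Px.take (n1+1)).length := by omega
  have hp3 : IsPth R ((Px.take (n1+1)).drop n0) (Px[n0]'hn0x) (Px[n1]'hn1x) := by
    have h9 := isPth_drop hpt hn0t
    have he : (Px.take (n1+1))[n0]'hn0t = Px[n0]'hn0x := List.getElem_take (xs := Px)
    rwa [he] at h9
  have hp4 : IsPth R (Pz.drop n0) (Px[n0]'hn0x) z := by
    have h9 := isPth_drop hPz hn0z
    rwa [← hexz] at h9
  have huv : Px[n1]'hn1x ≠ Px[n0]'hn0x := by
    intro he
    have h9 := nodup_idx nodx hn1x hn0x he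
    omega
  have cxy : ∀ w, w ∈ Px → w ∈ Py → ∃ j, j < mcp Px Py ∧
      ∃ (h1 : j < Px.length) (h2 : j < Py.length), Px[j] = w ∧ Py[j] = w :=
    fun w hwx hwy => common_mem hnet hr hPx hPy hux huy hwx hwy
  have cxz : ∀ w, w ∈ Px → w ∈ Pz → ∃ j, j < mcp Px Pz ∧
      ∃ (h1 : j < Px.length) (h2 : j < Pz.length), Px[j] = w ∧ Pz[j] = w :=
    fun w hwx hwz => common_mem hnet hr hPx hPz hux huz hwx hwz
  have cyz : ∀ w, w ∈ Py → w ∈ Pz → ∃ j, j < mcp Py Pz ∧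
      ∃ (h1 : j < Py.length) (h2 : j < Pz.length), Py[j] = w ∧ Pz[j] = w :=
    fun w hwy hwz => common_mem hnet hr hPy hPz huy huz hwy hwz
  have nod3 : ((Px.take (n1+1)).drop n0).Nodup :=
    nodx.sublist ((List.drop_sublist _ _).trans (List.take_sublist _ _))
  have int3 : ∀ w ∈ Phylo.interior ((Px.take (n1+1)).drop n0),
      ∃ i, n0 + 1 ≤ i ∧ i < n1 ∧ ∃ h : i < Px.length, Px[i] = w := by
    intro w hw
    have hne : w ≠ Px[n1]'hn1x := interior_ne_getLast hp3 hw nod3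
    obtain ⟨i, hi, hib, hie⟩ := mem_drop_idx (interior_drop_subset hw)
    have hile : i < n1 + 1 := by rw [hlent] at hib; omega
    have hix : i < Px.length := by omega
    have hiePx : Px[i]'hix = w := by
      rw [← hie]; exact (List.getElem_take (xs := Px)).symm
    have hin1 : i ≠ n1 := by
      intro he9; subst he9; exact hne hiePx.symm
    exact ⟨i, hi, by omega, hix, hiePx⟩
  refine ⟨Px[n1]'hn1x, Px[n0]'hn0x, Px.drop n1, Py.drop n1,
    (Px.take (n1+1)).drop n0, Pz.drop n0, huv, hp1, hp2, hp3, hp4,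
    ?_, ?_, ?_, ?_, ?_, ?_⟩
  -- d12
  · constructor
    · intro w hw hw2
      obtain ⟨i, hi, hib, hie⟩ := mem_drop_idx (interior_drop_subset hw)
      obtain ⟨j, hj, hj1, hj2, hjx, hjy⟩ :=
        cxy w (hie ▸ List.getElem_mem hib) (List.drop_subset _ _ hw2)
      have h9 : i = j := nodup_idx nodx hib hj1 (by rw [hie, hjx])
      omega
    · intro w hw hw2
      obtain ⟨i, hi, hib, hie⟩ := mem_drop_idx (interior_drop_subset hw)
      obtain ⟨j, hj, hj1, hj2, hjx, hjy⟩ :=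
        cxy w (List.drop_subset _ _ hw2) (hie ▸ List.getElem_mem hib)
      have h9 : i = j := nodup_idx nody hib hj2 (by rw [hie, hjy])
      omega
  -- d13
  · constructor
    · intro w hw hw2
      obtain ⟨i, hi, hib, hie⟩ := mem_drop_idx (interior_drop_subset hw)
      obtain ⟨k, hk, hkb, hke⟩ := mem_take_idx (List.drop_subset _ _ hw2)
      have h9 : i = k := nodup_idx nodx hib hkb (by rw [hie, hke])
      omega
    · intro w hw hw2
      obtain ⟨i, hi1, hi2, hix, hie⟩ := int3 w hw
      obtain ⟨k, hk, hkb, hke⟩ := mem_drop_idx hw2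
      have h9 : i = k := nodup_idx nodx hix hkb (by rw [hie, hke])
      omega
  -- d14
  · constructor
    · intro w hw hw2
      obtain ⟨i, hi, hib, hie⟩ := mem_drop_idx (interior_drop_subset hw)
      obtain ⟨j, hj, hj1, hj2, hjx, hjz⟩ :=
        cxz w (hie ▸ List.getElem_mem hib) (List.drop_subset _ _ hw2)
      have h9 : i = j := nodup_idx nodx hib hj1 (by rw [hie, hjx])
      omega
    · intro w hw hw2
      obtain ⟨i, hi, hib, hie⟩ := mem_drop_idx (interior_drop_subset hw)
      obtain ⟨j, hj, hj1, hj2, hjx, hjz⟩ :=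
        cxz w (List.drop_subset _ _ hw2) (hie ▸ List.getElem_mem hib)
      have h9 : i = j := nodup_idx nodz hib hj2 (by rw [hie, hjz])
      omega
  -- d23
  · constructor
    · intro w hw hw2
      obtain ⟨i, hi, hib, hie⟩ := mem_drop_idx (interior_drop_subset hw)
      have hwx : w ∈ Px := List.take_subset _ _ (List.drop_subset _ _ hw2)
      obtain ⟨j, hj, hj1, hj2, hjx, hjy⟩ :=
        cxy w hwx (hie ▸ List.getElem_mem hib)
      have h9 : i = j := nodup_idx nody hib hj2 (by rw [hie, hjy])
      omega
    · intro w hw hw2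
      obtain ⟨i, hi1, hi2, hix, hie⟩ := int3 w hw
      obtain ⟨k, hk, hkb, hke⟩ := mem_drop_idx hw2
      obtain ⟨j, hj, hj1, hj2, hjx, hjy⟩ :=
        cxy w (hie ▸ List.getElem_mem hix) (hke ▸ List.getElem_mem hkb)
      have h9 : i = j := nodup_idx nodx hix hj1 (by rw [hie, hjx])
      have h8 : k = j := nodup_idx nody hkb hj2 (by rw [hke, hjy])
      omega
  -- d24
  · constructor
    · intro w hw hw2
      obtain ⟨i, hi, hib, hie⟩ := mem_drop_idx (interior_drop_subset hw)
      obtain ⟨j, hj, hj1, hj2, hjy, hjz⟩ :=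
        cyz w (hie ▸ List.getElem_mem hib) (List.drop_subset _ _ hw2)
      have h9 : i = j := nodup_idx nody hib hj1 (by rw [hie, hjy])
      omega
    · intro w hw hw2
      obtain ⟨i, hi, hib, hie⟩ := mem_drop_idx (interior_drop_subset hw)
      obtain ⟨j, hj, hj1, hj2, hjy, hjz⟩ :=
        cyz w (List.drop_subset _ _ hw2) (hie ▸ List.getElem_mem hib)
      have h9 : i = j := nodup_idx nodz hib hj2 (by rw [hie, hjz])
      omega
  -- d34
  · constructor
    · intro w hw hw2
      obtain ⟨i, hi1, hi2, hix, hie⟩ := int3 w hw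
      obtain ⟨j, hj, hj1, hj2, hjx, hjz⟩ :=
        cxz w (hie ▸ List.getElem_mem hix) (List.drop_subset _ _ hw2)
      have h9 : i = j := nodup_idx nodx hix hj1 (by rw [hie, hjx])
      omega
    · intro w hw hw2
      obtain ⟨i, hi, hib, hie⟩ := mem_drop_idx (interior_drop_subset hw)
      have hwx : w ∈ Px := List.take_subset _ _ (List.drop_subset _ _ hw2)
      obtain ⟨j, hj, hj1, hj2, hjx, hjz⟩ :=
        cxz w hwx (hie ▸ List.getElem_mem hib)
      have h9 : i = j := nodup_idx nodz hib hj2 (by rw [hie, hjz])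
      omega


lemma neg_case (hnet : IsPhyloNet R) (hr : inDeg R r = 0)
    (hx : IsLf R x) (hxy : x ≠ y)
    (hPx : IsPth R Px r x) (hPy : IsPth R Py r y) (hPz : IsPth R Pz r z)
    (hux : ∀ p q : List V, IsPth R p r x → IsPth R q r x → p = q)
    (huy : ∀ p q : List V, IsPth R p r y → IsPth R q r y → p = q)
    (huz : ∀ p q : List V, IsPth R p r z → IsPth R q r z → p = q)
    (hm : mcp Px Pz = mcp Py Pz) (hlt : mcp Px Pz < mcp Px Py) :
    ¬ ConsistentTrip R x z y := by
  rintro ⟨a, b, p1, p2, p3, p4, hab, hp1, hp2, hp3, hp4, d12, d13, d14, d23, d24, d34⟩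
  have hbx' : mcp Px Py ≤ Px.length := le_trans (mcp_le _ _) (min_le_left _ _)
  have hby' : mcp Px Py ≤ Py.length := le_trans (mcp_le _ _) (min_le_right _ _)
  have nodx : Px.Nodup := nodup_of_chain' hnet.1 hPx.2.2.2
  have nody : Py.Nodup := nodup_of_chain' hnet.1 hPy.2.2.2
  -- suffix facts
  have hdx' : Px.dropLast ++ [x] = Px := by
    have h9 := List.dropLast_append_getLast hPx.1
    rwa [isPth_getLast hPx hPx.1] at h9
  have hdx : Px = Px.dropLast ++ x :: [] := hdx'.symm
  have hs1 : p1 <:+ Px := by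
    have h9 := path_to_mem_suffix hnet hr hPx hux hdx hp1
    rwa [hdx'] at h9
  have hdz' : Pz.dropLast ++ [z] = Pz := by
    have h9 := List.dropLast_append_getLast hPz.1
    rwa [isPth_getLast hPz hPz.1] at h9
  have hdz : Pz = Pz.dropLast ++ z :: [] := hdz'.symm
  have hs2 : p2 <:+ Pz := by
    have h9 := path_to_mem_suffix hnet hr hPz huz hdz hp2
    rwa [hdz'] at h9
  have hdy' : Py.dropLast ++ [y] = Py := by
    have h9 := List.dropLast_append_getLast hPy.1
    rwa [isPth_getLast hPy hPy.1] at h9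
  have hdy : Py = Py.dropLast ++ y :: [] := hdy'.symm
  have hs4 : p4 <:+ Py := by
    have h9 := path_to_mem_suffix hnet hr hPy huy hdy hp4
    rwa [hdy'] at h9
  -- a is a common vertex of Px and Pz
  have ha1 : a ∈ p1 := by rw [← isPth_head hp1]; exact List.mem_cons_self
  have haPx : a ∈ Px := hs1.subset ha1
  have ha2 : a ∈ p2 := by rw [← isPth_head hp2]; exact List.mem_cons_self
  have haPz : a ∈ Pz := hs2.subset ha2
  obtain ⟨ja, hja, hjax, hjaz, hjaex, hjaez⟩ :=
    common_mem hnet hr hPx hPz hux huz haPx haPz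
  -- b lies strictly before a on Px
  have hda : Px.drop ja = a :: Px.drop (ja + 1) := by
    rw [List.drop_eq_getElem_cons hjax, hjaex]
  have hdeca : Px = Px.take ja ++ a :: Px.drop (ja + 1) := by
    rw [← hda, List.take_append_drop]
  have hsfx3 : p3 <:+ Px.take ja ++ [a] := path_to_mem_suffix hnet hr hPx hux hdeca hp3
  have hb3 : b ∈ p3 := by rw [← isPth_head hp3]; exact List.mem_cons_self
  have hbmem : b ∈ Px.take ja ++ [a] := hsfx3.subset hb3
  have hbtake : b ∈ Px.take ja := by
    rcases List.mem_append.mp hbmem with h9 | h9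
    · exact h9
    · simp at h9; exact absurd h9.symm hab
  obtain ⟨jb, hjb, hjbx, hjbe⟩ := mem_take_idx hbtake
  -- b is common to Px and Py
  have hb4 : b ∈ p4 := by rw [← isPth_head hp4]; exact List.mem_cons_self
  have hbPy : b ∈ Py := hs4.subset hb4
  obtain ⟨kb, hkb, hkbx, hkby, hkbex, hkbey⟩ :=
    common_mem hnet hr hPx hPy hux huy (hjbe ▸ List.getElem_mem hjbx) hbPy
  have hkbjb : kb = jb := nodup_idx nodx hkbx hjbx (by rw [hkbex, hjbe])
  -- the witness w = Px[mcp Px Pz]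
  have h1 : mcp Px Pz < Px.length := by omega
  have h2 : mcp Px Pz < Py.length := by omega
  obtain ⟨h1', h2', hePxy⟩ := mcp_getElem (p := Px) (q := Py) (i := mcp Px Pz) hlt
  -- p1 and p4 as drops
  have hp1d : p1 = Px.drop ja := suffix_eq_drop hp1 hs1 nodx hjax hjaex
  have hp4d : p4 = Py.drop kb := suffix_eq_drop hp4 hs4 nody hkby hkbey
  -- w ∈ p4
  have hwp4 : Px[mcp Px Pz]'h1' ∈ p4 := by
    rw [hp4d, hePxy]
    exact drop_mem_of_idx (by omega) h2'
  -- w ∈ interior p1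
  have hptl : p1.tail = Px.drop (ja + 1) := by rw [hp1d, List.tail_drop]
  have hja1 : ja + 1 < Px.length := by omega
  have hpd : IsPth R (Px.drop (ja+1)) (Px[ja+1]'hja1) x := isPth_drop hPx hja1
  have hwnex : Px[mcp Px Pz]'h1' ≠ x := by
    intro he
    have hxPy : x ∉ Py := leaf_not_mem hx hxy hPy
    apply hxPy
    rw [← he, hePxy]
    exact List.getElem_mem h2'
  have hwint : Px[mcp Px Pz]'h1' ∈ Phylo.interior p1 := by
    unfold Phylo.interior
    rw [hptl]
    refine mem_dropLast_of_ne hpd.1 (drop_mem_of_idx (by omega) h1') ?_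
    rw [isPth_getLast hpd hpd.1]
    exact hwnex
  exact d14.1 _ hwint hwp4

lemma not_all_eq (hnet : IsPhyloNet R) (hr : inDeg R r = 0)
    (hx : IsLf R x) (hy : IsLf R y) (hz : IsLf R z)
    (hxy : x ≠ y) (hxz : x ≠ z)
    (hPx : IsPth R Px r x) (hPy : IsPth R Py r y) (hPz : IsPth R Pz r z)
    (h12 : mcp Px Py = mcp Px Pz) (h23 : mcp Px Pz = mcp Py Pz) : False := by
  have hm1 : 1 ≤ mcp Px Py := one_le_mcp hPx hPy
  have hltx : mcp Px Py < Px.length := mcp_lt_left hx hxy hPx hPy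
  have hlty : mcp Px Py < Py.length := by
    rw [mcp_comm]; exact mcp_lt_left hy hxy.symm hPy hPx
  have hltz : mcp Px Py < Pz.length := by
    rw [h12, mcp_comm]; exact mcp_lt_left hz hxz.symm hPz hPx
  obtain ⟨mm, hmm⟩ : ∃ mm, mcp Px Py = mm + 1 := ⟨mcp Px Py - 1, by omega⟩
  have hax : mm + 1 < Px.length := by omega
  have hay : mm + 1 < Py.length := by omega
  have haz : mm + 1 < Pz.length := by omega
  have hwx : mm < Px.length := by omega
  -- the three successors of w
  obtain ⟨e1, e2, exy⟩ := mcp_getElem (p := Px) (q := Py) (i := mm) (by omega)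
  obtain ⟨e3, e4, exz⟩ := mcp_getElem (p := Px) (q := Pz) (i := mm) (by omega)
  have cax : R (Px[mm]'hwx) (Px[mm+1]'hax) := chain'_rel hPx.2.2.2 hax
  have cay : R (Px[mm]'hwx) (Py[mm+1]'hay) := by
    have h9 := chain'_rel hPy.2.2.2 (i := mm) hay
    rwa [← exy] at h9
  have caz : R (Px[mm]'hwx) (Pz[mm+1]'haz) := by
    have h9 := chain'_rel hPz.2.2.2 (i := mm) haz
    rwa [← exz] at h9
  -- pairwise distinct
  have htkxy : Px.take (mm+1) = Py.take (mm+1) := by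
    have h9 := mcp_take Px Py; rwa [hmm] at h9
  have htkxz : Px.take (mm+1) = Pz.take (mm+1) := by
    have h9 := mcp_take Px Pz; rwa [← h12, hmm] at h9
  have htkyz : Py.take (mm+1) = Pz.take (mm+1) := htkxy.symm.trans htkxz
  have hab : Px[mm+1]'hax ≠ Py[mm+1]'hay := by
    intro he
    have h9 : Px.take (mm+1+1) = Py.take (mm+1+1) := by
      rw [← List.take_concat_get hax,
          ← List.take_concat_get hay, htkxy, he]
    have h8 := le_mcp (p := Px) (q := Py) (le_min (by omega) (by omega)) h9
    omega
  have hac : Px[mm+1]'hax ≠ Pz[mm+1]'haz := by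
    intro he
    have h9 : Px.take (mm+1+1) = Pz.take (mm+1+1) := by
      rw [← List.take_concat_get hax,
          ← List.take_concat_get haz, htkxz, he]
    have h8 := le_mcp (p := Px) (q := Pz) (le_min (by omega) (by omega)) h9
    omega
  have hbc : Py[mm+1]'hay ≠ Pz[mm+1]'haz := by
    intro he
    have h9 : Py.take (mm+1+1) = Pz.take (mm+1+1) := by
      rw [← List.take_concat_get hay,
          ← List.take_concat_get haz, htkyz, he]
    have h8 := le_mcp (p := Py) (q := Pz) (le_min (by omega) (by omega)) h9
    omega
  -- outdegree at least 3
  have hsub : ({Px[mm+1]'hax, Py[mm+1]'hay, Pz[mm+1]'haz} : Set V) ⊆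
      {w' | R (Px[mm]'hwx) w'} := by
    intro w hw
    rcases hw with rfl | hw
    · exact cax
    · rcases hw with rfl | hw
      · exact cay
      · rw [Set.mem_singleton_iff] at hw; subst hw; exact caz
  have hcard : ({Px[mm+1]'hax, Py[mm+1]'hay, Pz[mm+1]'haz} : Set V).ncard = 3 := by
    rw [Set.ncard_eq_three]
    exact ⟨_, _, _, hab, hac, hbc, rfl⟩
  have h3 : 3 ≤ outDeg R (Px[mm]'hwx) := by
    rw [outDeg, ← hcard]
    exact Set.ncard_le_ncard hsub (Set.toFinite _)
  rcases hnet.2.2 (Px[mm]'hwx) with h | h | h | h <;> omega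

end Main
end PhyloAux
open Phylo in
/-- If three distinct leaves `x`, `y`, `z` of a network are each
reachable from the root by a unique directed path, then exactly one of the triplets
`xy|z`, `xz|y`, `yz|x` is consistent with the network. -/
theorem stmt18 {V : Type*} [Fintype V] (R : V → V → Prop) (hnet : IsPhyloNet R)
    (r : V) (hr : inDeg R r = 0) (x y z : V)
    (hx : IsLf R x) (hy : IsLf R y) (hz : IsLf R z)
    (hxy : x ≠ y) (hxz : x ≠ z) (hyz : y ≠ z)
    (hux : ∀ p q : List V, IsPth R p r x → IsPth R q r x → p = q)
    (huy : ∀ p q : List V, IsPth R p r y → IsPth R q r y → p = q)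
    (huz : ∀ p q : List V, IsPth R p r z → IsPth R q r z → p = q) :
    (ConsistentTrip R x y z ∧ ¬ ConsistentTrip R x z y ∧ ¬ ConsistentTrip R y z x) ∨
    (¬ ConsistentTrip R x y z ∧ ConsistentTrip R x z y ∧ ¬ ConsistentTrip R y z x) ∨
    (¬ ConsistentTrip R x y z ∧ ¬ ConsistentTrip R x z y ∧ ConsistentTrip R y z x) := by

  classical
  obtain ⟨Px, hPx⟩ := PhyloAux.exists_root_path hnet hr x
  obtain ⟨Py, hPy⟩ := PhyloAux.exists_root_path hnet hr y
  obtain ⟨Pz, hPz⟩ := PhyloAux.exists_root_path hnet hr z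
  have c1 : PhyloAux.mcp Py Px = PhyloAux.mcp Px Py := PhyloAux.mcp_comm Py Px
  have c2 : PhyloAux.mcp Pz Px = PhyloAux.mcp Px Pz := PhyloAux.mcp_comm Pz Px
  have c3 : PhyloAux.mcp Pz Py = PhyloAux.mcp Py Pz := PhyloAux.mcp_comm Pz Py
  have NAE : ¬ (PhyloAux.mcp Px Py = PhyloAux.mcp Px Pz ∧
      PhyloAux.mcp Px Pz = PhyloAux.mcp Py Pz) := by
    rintro ⟨h12, h23⟩
    exact PhyloAux.not_all_eq hnet hr hx hy hz hxy hxz hPx hPy hPz h12 h23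
  have T1 : PhyloAux.mcp Px Py ≤ PhyloAux.mcp Px Pz →
      PhyloAux.mcp Px Py ≤ PhyloAux.mcp Py Pz := PhyloAux.mcp_le_trans
  have T2 : PhyloAux.mcp Px Pz ≤ PhyloAux.mcp Px Py →
      PhyloAux.mcp Px Pz ≤ PhyloAux.mcp Py Pz := by
    intro h
    have h9 := PhyloAux.mcp_le_trans (p := Px) (q := Pz) (s := Py) h
    omega
  have T3 : PhyloAux.mcp Px Py ≤ PhyloAux.mcp Py Pz →
      PhyloAux.mcp Px Py ≤ PhyloAux.mcp Px Pz := by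
    intro h
    have h9 := PhyloAux.mcp_le_trans (p := Py) (q := Px) (s := Pz) (by omega)
    omega
  have T4 : PhyloAux.mcp Py Pz ≤ PhyloAux.mcp Px Py →
      PhyloAux.mcp Py Pz ≤ PhyloAux.mcp Px Pz := by
    intro h
    have h9 := PhyloAux.mcp_le_trans (p := Py) (q := Pz) (s := Px) (by omega)
    omega
  have T5 : PhyloAux.mcp Px Pz ≤ PhyloAux.mcp Py Pz →
      PhyloAux.mcp Px Pz ≤ PhyloAux.mcp Px Py := by
    intro h
    have h9 := PhyloAux.mcp_le_trans (p := Pz) (q := Px) (s := Py) (by omega)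
    omega
  have T6 : PhyloAux.mcp Py Pz ≤ PhyloAux.mcp Px Pz →
      PhyloAux.mcp Py Pz ≤ PhyloAux.mcp Px Py := by
    intro h
    have h9 := PhyloAux.mcp_le_trans (p := Pz) (q := Py) (s := Px) (by omega)
    omega
  rcases lt_trichotomy (PhyloAux.mcp Px Py) (PhyloAux.mcp Px Pz) with hAB | hAB | hAB
  · -- A < B : middle branch, A = C < B, close pair is {x,z}
    have hAC : PhyloAux.mcp Px Py ≤ PhyloAux.mcp Py Pz := T1 (le_of_lt hAB)
    have hCA : PhyloAux.mcp Py Pz ≤ PhyloAux.mcp Px Py := by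
      by_contra hcon
      push_neg at hcon
      rcases le_total (PhyloAux.mcp Px Pz) (PhyloAux.mcp Py Pz) with h9 | h9
      · have := T5 h9; omega
      · have := T6 h9; omega
    refine Or.inr (Or.inl ⟨?_, ?_, ?_⟩)
    · exact PhyloAux.neg_case hnet hr hx hxz hPx hPz hPy hux huz huy
        (by omega) (by omega)
    · exact PhyloAux.pos_case hnet hr hPx hPz hPy hux huz huy
        (by omega) (by omega)
    · intro hcon
      exact PhyloAux.neg_case hnet hr hz hxz.symm hPz hPx hPy huz hux huy
        (by omega) (by omega) (PhyloAux.consistent_swap hcon)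
  · -- A = B : right branch, A = B < C, close pair is {y,z}
    have hBC : PhyloAux.mcp Px Pz < PhyloAux.mcp Py Pz := by
      by_contra hcon
      push_neg at hcon
      have h9 := T6 hcon
      have h8 := T1 (le_of_eq hAB)
      exact NAE ⟨hAB, by omega⟩
    refine Or.inr (Or.inr ⟨?_, ?_, ?_⟩)
    · intro hcon
      exact PhyloAux.neg_case hnet hr hy hyz hPy hPz hPx huy huz hux
        (by omega) (by omega) (PhyloAux.consistent_swap hcon)
    · intro hcon
      exact PhyloAux.neg_case hnet hr hz hyz.symm hPz hPy hPx huz huy hux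
        (by omega) (by omega) (PhyloAux.consistent_swap hcon)
    · exact PhyloAux.pos_case hnet hr hPy hPz hPx huy huz hux
        (by omega) (by omega)
  · -- B < A : left branch, B = C < A, close pair is {x,y}
    have hBC : PhyloAux.mcp Px Pz ≤ PhyloAux.mcp Py Pz := T2 (le_of_lt hAB)
    have hCB : PhyloAux.mcp Py Pz ≤ PhyloAux.mcp Px Pz := by
      by_contra hcon
      push_neg at hcon
      rcases le_total (PhyloAux.mcp Px Py) (PhyloAux.mcp Py Pz) with h9 | h9
      · have := T3 h9; omega
      · have := T4 h9; omega
    refine Or.inl ⟨?_, ?_, ?_⟩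
    · exact PhyloAux.pos_case hnet hr hPx hPy hPz hux huy huz (by omega) hAB
    · exact PhyloAux.neg_case hnet hr hx hxy hPx hPy hPz hux huy huz (by omega) hAB
    · exact PhyloAux.neg_case hnet hr hy hxy.symm hPy hPx hPz huy hux huz
        (by omega) (by omega)
end
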